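/- arXiv:2602.18310 — 7 statements merged into one kernel-verified Lean document; each statement's English description precedes it below -/
import Mathlib

section
/- There are exactly 3 periodic maximal independent sets of the triangular lattice of density 1/3: a set S ⊆ ℤ² is a (v₁,v₂)-periodic maximal independent set (for some v₁,v₂ ≥ 1) satisfying 3·|S ∩ D| = v₁·v₂ if and only if S = {(i,j) ∈ ℤ² : i + 2j ≡ c (mod 3)} for some c ∈ {0,1,2}; these three sets are pairwise distinct. -/
/-- Adjacency in the triangular lattice, modeled on `ℤ × ℤ`. -/
def TriAdj (u v : ℤ × ℤ) : Prop :=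
  (u.1 - v.1, u.2 - v.2) ∈
    ({(1, 0), (-1, 0), (0, 1), (0, -1), (1, -1), (-1, 1)} : Finset (ℤ × ℤ))

/-- A set of sites is independent if no two of its elements are adjacent. -/
def IsIndependent (S : Set (ℤ × ℤ)) : Prop :=
  ∀ u ∈ S, ∀ v ∈ S, ¬ TriAdj u v

/-- Maximal independent set of the triangular lattice. -/
def IsMIS (S : Set (ℤ × ℤ)) : Prop :=
  IsIndependent S ∧ ∀ u ∉ S, ∃ v ∈ S, TriAdj u v

/-- `S` is `(v₁, v₂)`-periodic. -/
def IsPeriodic (v₁ v₂ : ℤ) (S : Set (ℤ × ℤ)) : Prop :=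
  (∀ p : ℤ × ℤ, p ∈ S ↔ (p.1 + v₁, p.2) ∈ S) ∧
  (∀ p : ℤ × ℤ, p ∈ S ↔ (p.1, p.2 + v₂) ∈ S)

/-- The fundamental domain `D = {0,…,v₁−1} × {0,…,v₂−1}`. -/
def FundDomain (v₁ v₂ : ℤ) : Set (ℤ × ℤ) :=
  {p | 0 ≤ p.1 ∧ p.1 < v₁ ∧ 0 ≤ p.2 ∧ p.2 < v₂}

/-- The sublattice `{(i,j) : i + 2j ≡ c (mod 3)}`. -/
def DenseState (c : ZMod 3) : Set (ℤ × ℤ) :=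
  {p | ((p.1 + 2 * p.2 : ℤ) : ZMod 3) = c}


section AuxDensePGS

lemma triAdj_iff (u v : ℤ × ℤ) : TriAdj u v ↔
    (u.1 - v.1 = 1 ∧ u.2 - v.2 = 0) ∨ (u.1 - v.1 = -1 ∧ u.2 - v.2 = 0) ∨
    (u.1 - v.1 = 0 ∧ u.2 - v.2 = 1) ∨ (u.1 - v.1 = 0 ∧ u.2 - v.2 = -1) ∨
    (u.1 - v.1 = 1 ∧ u.2 - v.2 = -1) ∨ (u.1 - v.1 = -1 ∧ u.2 - v.2 = 1) := by
  simp [TriAdj, Prod.ext_iff]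

lemma mkAdj (x y a b : ℤ)
    (h : (x - a = 1 ∧ y - b = 0) ∨ (x - a = -1 ∧ y - b = 0) ∨
         (x - a = 0 ∧ y - b = 1) ∨ (x - a = 0 ∧ y - b = -1) ∨
         (x - a = 1 ∧ y - b = -1) ∨ (x - a = -1 ∧ y - b = 1)) :
    TriAdj (x, y) (a, b) := by
  rw [triAdj_iff]
  simpa using h

lemma mem3 {α : Type*} [DecidableEq α] (a b c x : α) (hab : a ≠ b) (hac : a ≠ c) (hbc : b ≠ c) :
    (if x ∈ ({a, b, c} : Finset α) then (1:ℕ) else 0) =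
      (if x = a then 1 else 0) + (if x = b then 1 else 0) + (if x = c then 1 else 0) := by
  by_cases h1 : x = a <;> by_cases h2 : x = b <;> by_cases h3 : x = c <;> simp_all

lemma sum_shift {T : Type*} [Fintype T] [DecidableEq T] [AddCommGroup T] (y d : T) :
    ∑ p : T, (if y = p + d then (1:ℕ) else 0) = 1 := by
  have h : ∀ p : T, (if y = p + d then (1:ℕ) else 0) = (if p = y - d then 1 else 0) := by
    intro p
    by_cases h : p = y - d
    · simp [h]
    · have : y ≠ p + d := fun he => h (by rw [he]; abel)
      simp [h, this]
  simp_rw [h]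
  simp

lemma face_counting {T : Type*} [Fintype T] [DecidableEq T]
    (face : T × Bool → Finset T) (A : Finset T)
    (hle : ∀ i, (A.filter (· ∈ face i)).card ≤ 1)
    (hsix : ∀ x : T, (∑ i : T × Bool, if x ∈ face i then (1:ℕ) else 0) = 6)
    (hcard : 3 * A.card = Fintype.card T) :
    ∀ i, ∃ x ∈ A, x ∈ face i := by
  by_contra hcon
  push_neg at hcon
  obtain ⟨i₀, hi₀⟩ := hcon
  have hzero : (A.filter (· ∈ face i₀)).card = 0 := by
    rw [Finset.card_eq_zero, Finset.filter_eq_empty_iff]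
    exact fun x hx => hi₀ x hx
  have hsum : (∑ i : T × Bool, (A.filter (· ∈ face i)).card) = 6 * A.card := by
    have h1 : ∀ i, (A.filter (· ∈ face i)).card = ∑ x ∈ A, if x ∈ face i then (1:ℕ) else 0 := by
      intro i; rw [Finset.card_filter]
    simp_rw [h1]
    rw [Finset.sum_comm]
    simp_rw [hsix]
    simp [mul_comm]
  have hlt : (∑ i : T × Bool, (A.filter (· ∈ face i)).card) < ∑ _i : T × Bool, 1 :=
    Finset.sum_lt_sum (fun i _ => hle i) ⟨i₀, Finset.mem_univ _, by omega⟩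
  have h2 : (∑ _i : T × Bool, (1:ℕ)) = 2 * Fintype.card T := by
    simp [Fintype.card_prod, mul_comm]
  omega

/-- projection to the torus -/
def tpi (w h : ℕ) (q : ℤ × ℤ) : ZMod w × ZMod h := ((q.1 : ZMod w), (q.2 : ZMod h))

def eps1 (w h : ℕ) : ZMod w × ZMod h := (1, 0)
def eps2 (w h : ℕ) : ZMod w × ZMod h := (0, 1)

/-- faces of the torus -/
def tface (w h : ℕ) (i : (ZMod w × ZMod h) × Bool) : Finset (ZMod w × ZMod h) :=
  if i.2 then {i.1, i.1 + eps1 w h, i.1 + eps2 w h}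
  else {i.1 + eps1 w h, i.1 + eps2 w h, i.1 + eps1 w h + eps2 w h}

lemma tpi_sh1 (w h : ℕ) (a b : ℤ) : tpi w h (a + 1, b) = tpi w h (a, b) + eps1 w h := by
  simp [tpi, eps1, Prod.ext_iff]

lemma tpi_sh2 (w h : ℕ) (a b : ℤ) : tpi w h (a, b + 1) = tpi w h (a, b) + eps2 w h := by
  simp [tpi, eps2, Prod.ext_iff]

lemma hsix (w h : ℕ) [NeZero w] [NeZero h] (hw : 1 < w) (hh : 1 < h) (x : ZMod w × ZMod h) :
    (∑ i : (ZMod w × ZMod h) × Bool, if x ∈ tface w h i then (1:ℕ) else 0) = 6 := by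
  haveI : Fact (1 < w) := ⟨hw⟩
  haveI : Fact (1 < h) := ⟨hh⟩
  have h10 : eps1 w h ≠ 0 := by simp [eps1, Prod.ext_iff]
  have h20 : eps2 w h ≠ 0 := by simp [eps2, Prod.ext_iff]
  have h12 : eps1 w h ≠ eps2 w h := by simp [eps1, eps2, Prod.ext_iff]
  rw [Fintype.sum_prod_type]
  have key : ∀ p : ZMod w × ZMod h,
      (∑ b : Bool, if x ∈ tface w h (p, b) then (1:ℕ) else 0) =
      ((if x = p + 0 then (1:ℕ) else 0) + (if x = p + eps1 w h then 1 else 0) +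
        (if x = p + eps2 w h then 1 else 0)) +
      ((if x = p + eps1 w h then (1:ℕ) else 0) + (if x = p + eps2 w h then 1 else 0) +
        (if x = p + (eps1 w h + eps2 w h) then 1 else 0)) := by
    intro p
    rw [Fintype.sum_bool]
    have e1 : tface w h (p, true) = {p, p + eps1 w h, p + eps2 w h} := rfl
    have e2 : tface w h (p, false) = {p + eps1 w h, p + eps2 w h, p + eps1 w h + eps2 w h} := rfl
    rw [e1, e2]
    rw [mem3 p (p + eps1 w h) (p + eps2 w h) x
        (by simp [h10]) (by simp [h20]) (by simp [h12])]
    rw [mem3 (p + eps1 w h) (p + eps2 w h) (p + eps1 w h + eps2 w h) x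
        (by simp [h12]) (by simp [h20]) (by simp [add_assoc, h10])]
    rw [add_zero, add_assoc p]
  simp_rw [key]
  simp only [Finset.sum_add_distrib, sum_shift, Finset.sum_ite_eq, Finset.mem_univ, if_true]
  norm_num

lemma perX {S : Set (ℤ × ℤ)} {v₁ v₂ : ℤ} (hper : IsPeriodic v₁ v₂ S) :
    ∀ (k a b : ℤ), (a, b) ∈ S → (a + k * v₁, b) ∈ S := by
  intro k
  induction k using Int.induction_on with
  | zero => intro a b hab; simpa using hab
  | succ n ih =>
      intro a b hab
      have h2 := (hper.1 (a + n * v₁, b)).mp (ih a b hab)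
      convert h2 using 2
      push_cast
      ring
  | pred n ih =>
      intro a b hab
      have h2 := ih a b hab
      have h3 := (hper.1 (a + (-n - 1) * v₁, b)).mpr (by convert h2 using 2; push_cast; ring)
      convert h3 using 2 <;> (push_cast; ring)

lemma perY {S : Set (ℤ × ℤ)} {v₁ v₂ : ℤ} (hper : IsPeriodic v₁ v₂ S) :
    ∀ (l a b : ℤ), (a, b) ∈ S → (a, b + l * v₂) ∈ S := by
  intro l
  induction l using Int.induction_on with
  | zero => intro a b hab; simpa using hab
  | succ n ih =>
      intro a b hab
      have h2 := (hper.2 (a, b + n * v₂)).mp (ih a b hab)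
      convert h2 using 2
      push_cast
      ring
  | pred n ih =>
      intro a b hab
      have h3 := (hper.2 (a, b + (-n - 1) * v₂)).mpr (by convert ih a b hab using 2; push_cast; ring)
      convert h3 using 2 <;> (push_cast; ring)

lemma cast_vanish (w : ℕ) (v : ℤ) (hwv : (w:ℤ) = v) : ((v : ℤ) : ZMod w) = 0 := by
  rw [← hwv]
  exact_mod_cast ZMod.natCast_self w

lemma mem_iff_pi {S : Set (ℤ × ℤ)} {v₁ v₂ : ℤ} (hper : IsPeriodic v₁ v₂ S)
    (hv₁ : 1 ≤ v₁) (hv₂ : 1 ≤ v₂)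
    (w h : ℕ) (hwv : (w:ℤ) = v₁) (hhv : (h:ℤ) = v₂)
    (Sf : Finset (ℤ × ℤ))
    (hSf : ∀ p : ℤ × ℤ, p ∈ Sf ↔ p ∈ S ∧ 0 ≤ p.1 ∧ p.1 < v₁ ∧ 0 ≤ p.2 ∧ p.2 < v₂) :
    ∀ q : ℤ × ℤ, q ∈ S ↔ tpi w h q ∈ Sf.image (tpi w h) := by
  have hmod : ∀ a : ℤ, ((a % v₁ : ℤ) : ZMod w) = (a : ZMod w) := by
    intro a
    conv_rhs => rw [show a = v₁ * (a / v₁) + a % v₁ from (Int.mul_ediv_add_emod a v₁).symm]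
    push_cast
    rw [cast_vanish w v₁ hwv]
    ring
  have hmod2 : ∀ a : ℤ, ((a % v₂ : ℤ) : ZMod h) = (a : ZMod h) := by
    intro a
    conv_rhs => rw [show a = v₂ * (a / v₂) + a % v₂ from (Int.mul_ediv_add_emod a v₂).symm]
    push_cast
    rw [cast_vanish h v₂ hhv]
    ring
  intro q
  constructor
  · intro hq
    have hr : (q.1 % v₁, q.2 % v₂) ∈ Sf := by
      rw [hSf]
      refine ⟨?_, Int.emod_nonneg _ (by omega), Int.emod_lt_of_pos _ (by omega),
        Int.emod_nonneg _ (by omega), Int.emod_lt_of_pos _ (by omega)⟩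
      have h1 : (q.1 + (-(q.1 / v₁)) * v₁, q.2) ∈ S := perX hper _ _ _ (by simpa using hq)
      have h2 := perY hper (-(q.2 / v₂)) _ _ h1
      convert h2 using 2
      · rw [Int.emod_def]; ring
      · rw [Int.emod_def]; ring
    refine Finset.mem_image.mpr ⟨_, hr, ?_⟩
    simp only [tpi, Prod.ext_iff]
    exact ⟨hmod q.1, hmod2 q.2⟩
  · intro hq
    obtain ⟨x, hxSf, hxq⟩ := Finset.mem_image.mp hq
    have hxS := ((hSf x).mp hxSf).1
    have h1 : (x.1 : ZMod w) = (q.1 : ZMod w) := congrArg Prod.fst hxq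
    have h2 : (x.2 : ZMod h) = (q.2 : ZMod h) := congrArg Prod.snd hxq
    have hd1 : v₁ ∣ q.1 - x.1 := by
      rw [← hwv, ← ZMod.intCast_zmod_eq_zero_iff_dvd]
      push_cast
      rw [h1]
      ring
    have hd2 : v₂ ∣ q.2 - x.2 := by
      rw [← hhv, ← ZMod.intCast_zmod_eq_zero_iff_dvd]
      push_cast
      rw [h2]
      ring
    obtain ⟨k, hk⟩ := hd1
    obtain ⟨l, hl⟩ := hd2
    have h3 : (x.1 + k * v₁, x.2 + l * v₂) ∈ S :=
      perY hper l _ _ (perX hper k x.1 x.2 (by simpa using hxS))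
    convert h3 using 2
    · linear_combination hk
    · linear_combination hl

lemma card_le_one_face {S : Set (ℤ × ℤ)} (hind : IsIndependent S) {w h : ℕ}
    (A : Finset (ZMod w × ZMod h)) (hmem : ∀ q : ℤ × ℤ, q ∈ S ↔ tpi w h q ∈ A) :
    ∀ i, (A.filter (· ∈ tface w h i)).card ≤ 1 := by
  rintro ⟨p, bb⟩
  rw [Finset.card_le_one]
  obtain ⟨a, ha⟩ := ZMod.intCast_surjective p.1
  obtain ⟨b, hb⟩ := ZMod.intCast_surjective p.2
  have hp : p = tpi w h (a, b) := by
    simp [tpi, ha, hb]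
  subst hp
  intro x hx y hy
  rw [Finset.mem_filter] at hx hy
  obtain ⟨hxA, hxf⟩ := hx
  obtain ⟨hyA, hyf⟩ := hy
  cases bb with
  | true =>
      simp only [tface, if_pos, if_true] at hxf hyf
      rw [Finset.mem_insert, Finset.mem_insert, Finset.mem_singleton] at hxf hyf
      rw [← tpi_sh1, ← tpi_sh2] at hxf hyf
      rcases hxf with hxu | hxu | hxu <;> rcases hyf with hyu | hyu | hyu
      · -- x from (a, b), y from (a, b)
        have hu : (a, b) ∈ S := (hmem (a, b)).mpr (hxu ▸ hxA)
        have hv : (a, b) ∈ S := (hmem (a, b)).mpr (hyu ▸ hyA)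
        rw [hxu, hyu]
      · -- x from (a, b), y from (a + 1, b)
        have hu : (a, b) ∈ S := (hmem (a, b)).mpr (hxu ▸ hxA)
        have hv : (a + 1, b) ∈ S := (hmem (a + 1, b)).mpr (hyu ▸ hyA)
        exact absurd (show TriAdj (a, b) (a + 1, b) by
            simp only [TriAdj, Finset.mem_insert, Finset.mem_singleton, Prod.mk.injEq]
            omega) (hind (a, b) hu (a + 1, b) hv)
      · -- x from (a, b), y from (a, b + 1)
        have hu : (a, b) ∈ S := (hmem (a, b)).mpr (hxu ▸ hxA)
        have hv : (a, b + 1) ∈ S := (hmem (a, b + 1)).mpr (hyu ▸ hyA)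
        exact absurd (show TriAdj (a, b) (a, b + 1) by
            simp only [TriAdj, Finset.mem_insert, Finset.mem_singleton, Prod.mk.injEq]
            omega) (hind (a, b) hu (a, b + 1) hv)
      · -- x from (a + 1, b), y from (a, b)
        have hu : (a + 1, b) ∈ S := (hmem (a + 1, b)).mpr (hxu ▸ hxA)
        have hv : (a, b) ∈ S := (hmem (a, b)).mpr (hyu ▸ hyA)
        exact absurd (show TriAdj (a + 1, b) (a, b) by
            simp only [TriAdj, Finset.mem_insert, Finset.mem_singleton, Prod.mk.injEq]
            omega) (hind (a + 1, b) hu (a, b) hv)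
      · -- x from (a + 1, b), y from (a + 1, b)
        have hu : (a + 1, b) ∈ S := (hmem (a + 1, b)).mpr (hxu ▸ hxA)
        have hv : (a + 1, b) ∈ S := (hmem (a + 1, b)).mpr (hyu ▸ hyA)
        rw [hxu, hyu]
      · -- x from (a + 1, b), y from (a, b + 1)
        have hu : (a + 1, b) ∈ S := (hmem (a + 1, b)).mpr (hxu ▸ hxA)
        have hv : (a, b + 1) ∈ S := (hmem (a, b + 1)).mpr (hyu ▸ hyA)
        exact absurd (show TriAdj (a + 1, b) (a, b + 1) by
            simp only [TriAdj, Finset.mem_insert, Finset.mem_singleton, Prod.mk.injEq]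
            omega) (hind (a + 1, b) hu (a, b + 1) hv)
      · -- x from (a, b + 1), y from (a, b)
        have hu : (a, b + 1) ∈ S := (hmem (a, b + 1)).mpr (hxu ▸ hxA)
        have hv : (a, b) ∈ S := (hmem (a, b)).mpr (hyu ▸ hyA)
        exact absurd (show TriAdj (a, b + 1) (a, b) by
            simp only [TriAdj, Finset.mem_insert, Finset.mem_singleton, Prod.mk.injEq]
            omega) (hind (a, b + 1) hu (a, b) hv)
      · -- x from (a, b + 1), y from (a + 1, b)
        have hu : (a, b + 1) ∈ S := (hmem (a, b + 1)).mpr (hxu ▸ hxA)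
        have hv : (a + 1, b) ∈ S := (hmem (a + 1, b)).mpr (hyu ▸ hyA)
        exact absurd (show TriAdj (a, b + 1) (a + 1, b) by
            simp only [TriAdj, Finset.mem_insert, Finset.mem_singleton, Prod.mk.injEq]
            omega) (hind (a, b + 1) hu (a + 1, b) hv)
      · -- x from (a, b + 1), y from (a, b + 1)
        have hu : (a, b + 1) ∈ S := (hmem (a, b + 1)).mpr (hxu ▸ hxA)
        have hv : (a, b + 1) ∈ S := (hmem (a, b + 1)).mpr (hyu ▸ hyA)
        rw [hxu, hyu]
  | false =>
      simp only [tface, Bool.false_eq_true, if_false] at hxf hyf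
      rw [Finset.mem_insert, Finset.mem_insert, Finset.mem_singleton] at hxf hyf
      rw [← tpi_sh1, ← tpi_sh2, ← tpi_sh2 w h (a + 1) b] at hxf hyf
      rcases hxf with hxu | hxu | hxu <;> rcases hyf with hyu | hyu | hyu
      · -- x from (a + 1, b), y from (a + 1, b)
        have hu : (a + 1, b) ∈ S := (hmem (a + 1, b)).mpr (hxu ▸ hxA)
        have hv : (a + 1, b) ∈ S := (hmem (a + 1, b)).mpr (hyu ▸ hyA)
        rw [hxu, hyu]
      · -- x from (a + 1, b), y from (a, b + 1)
        have hu : (a + 1, b) ∈ S := (hmem (a + 1, b)).mpr (hxu ▸ hxA)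
        have hv : (a, b + 1) ∈ S := (hmem (a, b + 1)).mpr (hyu ▸ hyA)
        exact absurd (show TriAdj (a + 1, b) (a, b + 1) by
            simp only [TriAdj, Finset.mem_insert, Finset.mem_singleton, Prod.mk.injEq]
            omega) (hind (a + 1, b) hu (a, b + 1) hv)
      · -- x from (a + 1, b), y from (a + 1, b + 1)
        have hu : (a + 1, b) ∈ S := (hmem (a + 1, b)).mpr (hxu ▸ hxA)
        have hv : (a + 1, b + 1) ∈ S := (hmem (a + 1, b + 1)).mpr (hyu ▸ hyA)
        exact absurd (show TriAdj (a + 1, b) (a + 1, b + 1) by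
            simp only [TriAdj, Finset.mem_insert, Finset.mem_singleton, Prod.mk.injEq]
            omega) (hind (a + 1, b) hu (a + 1, b + 1) hv)
      · -- x from (a, b + 1), y from (a + 1, b)
        have hu : (a, b + 1) ∈ S := (hmem (a, b + 1)).mpr (hxu ▸ hxA)
        have hv : (a + 1, b) ∈ S := (hmem (a + 1, b)).mpr (hyu ▸ hyA)
        exact absurd (show TriAdj (a, b + 1) (a + 1, b) by
            simp only [TriAdj, Finset.mem_insert, Finset.mem_singleton, Prod.mk.injEq]
            omega) (hind (a, b + 1) hu (a + 1, b) hv)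
      · -- x from (a, b + 1), y from (a, b + 1)
        have hu : (a, b + 1) ∈ S := (hmem (a, b + 1)).mpr (hxu ▸ hxA)
        have hv : (a, b + 1) ∈ S := (hmem (a, b + 1)).mpr (hyu ▸ hyA)
        rw [hxu, hyu]
      · -- x from (a, b + 1), y from (a + 1, b + 1)
        have hu : (a, b + 1) ∈ S := (hmem (a, b + 1)).mpr (hxu ▸ hxA)
        have hv : (a + 1, b + 1) ∈ S := (hmem (a + 1, b + 1)).mpr (hyu ▸ hyA)
        exact absurd (show TriAdj (a, b + 1) (a + 1, b + 1) by
            simp only [TriAdj, Finset.mem_insert, Finset.mem_singleton, Prod.mk.injEq]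
            omega) (hind (a, b + 1) hu (a + 1, b + 1) hv)
      · -- x from (a + 1, b + 1), y from (a + 1, b)
        have hu : (a + 1, b + 1) ∈ S := (hmem (a + 1, b + 1)).mpr (hxu ▸ hxA)
        have hv : (a + 1, b) ∈ S := (hmem (a + 1, b)).mpr (hyu ▸ hyA)
        exact absurd (show TriAdj (a + 1, b + 1) (a + 1, b) by
            simp only [TriAdj, Finset.mem_insert, Finset.mem_singleton, Prod.mk.injEq]
            omega) (hind (a + 1, b + 1) hu (a + 1, b) hv)
      · -- x from (a + 1, b + 1), y from (a, b + 1)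
        have hu : (a + 1, b + 1) ∈ S := (hmem (a + 1, b + 1)).mpr (hxu ▸ hxA)
        have hv : (a, b + 1) ∈ S := (hmem (a, b + 1)).mpr (hyu ▸ hyA)
        exact absurd (show TriAdj (a + 1, b + 1) (a, b + 1) by
            simp only [TriAdj, Finset.mem_insert, Finset.mem_singleton, Prod.mk.injEq]
            omega) (hind (a + 1, b + 1) hu (a, b + 1) hv)
      · -- x from (a + 1, b + 1), y from (a + 1, b + 1)
        have hu : (a + 1, b + 1) ∈ S := (hmem (a + 1, b + 1)).mpr (hxu ▸ hxA)
        have hv : (a + 1, b + 1) ∈ S := (hmem (a + 1, b + 1)).mpr (hyu ▸ hyA)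
        rw [hxu, hyu]


lemma hits {S : Set (ℤ × ℤ)} (hind : IsIndependent S) {w h : ℕ} (hw : 1 < w) (hh : 1 < h)
    (A : Finset (ZMod w × ZMod h)) (hmem : ∀ q : ℤ × ℤ, q ∈ S ↔ tpi w h q ∈ A)
    (hcard : 3 * A.card = w * h) :
    ∀ a b : ℤ, ((a, b) ∈ S ∨ (a + 1, b) ∈ S ∨ (a, b + 1) ∈ S) ∧
      ((a + 1, b) ∈ S ∨ (a, b + 1) ∈ S ∨ (a + 1, b + 1) ∈ S) := by
  haveI : NeZero w := ⟨by omega⟩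
  haveI : NeZero h := ⟨by omega⟩
  have hcT : Fintype.card (ZMod w × ZMod h) = w * h := by
    simp [ZMod.card]
  have hfc := face_counting (tface w h) A (card_le_one_face hind A hmem)
    (hsix w h hw hh) (by rw [hcT]; exact hcard)
  intro a b
  constructor
  · obtain ⟨x, hxA, hxf⟩ := hfc (tpi w h (a, b), true)
    simp only [tface, if_pos, if_true] at hxf
    rw [Finset.mem_insert, Finset.mem_insert, Finset.mem_singleton] at hxf
    rw [← tpi_sh1, ← tpi_sh2] at hxf
    rcases hxf with hcase | hcase | hcase
    · exact Or.inl ((hmem _).mpr (hcase ▸ hxA))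
    · exact Or.inr (Or.inl ((hmem _).mpr (hcase ▸ hxA)))
    · exact Or.inr (Or.inr ((hmem _).mpr (hcase ▸ hxA)))
  · obtain ⟨x, hxA, hxf⟩ := hfc (tpi w h (a, b), false)
    simp only [tface, Bool.false_eq_true, if_false] at hxf
    rw [Finset.mem_insert, Finset.mem_insert, Finset.mem_singleton] at hxf
    rw [← tpi_sh1, ← tpi_sh2, ← tpi_sh2 w h (a + 1) b] at hxf
    rcases hxf with hcase | hcase | hcase
    · exact Or.inl ((hmem _).mpr (hcase ▸ hxA))
    · exact Or.inr (Or.inl ((hmem _).mpr (hcase ▸ hxA)))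
    · exact Or.inr (Or.inr ((hmem _).mpr (hcase ▸ hxA)))

section Closure
variable {S : Set (ℤ × ℤ)} (hind : IsIndependent S)
  (hitU : ∀ a b : ℤ, (a, b) ∈ S ∨ (a + 1, b) ∈ S ∨ (a, b + 1) ∈ S)
  (hitD : ∀ a b : ℤ, (a + 1, b) ∈ S ∨ (a, b + 1) ∈ S ∨ (a + 1, b + 1) ∈ S)

include hind hitD in
lemma move1 : ∀ a b : ℤ, (a, b) ∈ S → (a + 1, b + 1) ∈ S := by
  intro a b hab
  rcases hitD a b with hc | hc | hc
  · exact absurd (mkAdj _ _ _ _ (by omega)) (hind _ hc _ hab)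
  · exact absurd (mkAdj _ _ _ _ (by omega)) (hind _ hc _ hab)
  · exact hc

include hind hitU in
lemma move2 : ∀ a b : ℤ, (a, b) ∈ S → (a + 2, b - 1) ∈ S := by
  intro a b hab
  rcases hitU (a + 1) (b - 1) with hc | hc | hc
  · exact absurd (mkAdj _ _ _ _ (by omega)) (hind _ hc _ hab)
  · exact (by convert hc using 2; ring)
  · exact absurd (mkAdj _ _ _ _ (by omega)) (hind _ hc _ hab)

include hind hitU in
lemma move3 : ∀ a b : ℤ, (a, b) ∈ S → (a - 1, b - 1) ∈ S := by
  intro a b hab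
  rcases hitU (a - 1) (b - 1) with hc | hc | hc
  · exact hc
  · exact absurd (mkAdj _ _ _ _ (by omega)) (hind _ hc _ hab)
  · exact absurd (mkAdj _ _ _ _ (by omega)) (hind _ hc _ hab)

include hind hitD in
lemma move4 : ∀ a b : ℤ, (a, b) ∈ S → (a - 2, b + 1) ∈ S := by
  intro a b hab
  rcases hitD (a - 2) b with hc | hc | hc
  · exact absurd (mkAdj _ _ _ _ (by omega)) (hind _ hc _ hab)
  · exact hc
  · exact absurd (mkAdj _ _ _ _ (by omega)) (hind _ hc _ hab)

include hind hitU hitD in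
lemma diagMove : ∀ (n a b : ℤ), (a, b) ∈ S → (a + n, b + n) ∈ S := by
  intro n
  induction n using Int.induction_on with
  | zero => intro a b hab; simpa using hab
  | succ m ih =>
      intro a b hab
      have h2 := move1 hind hitD _ _ (ih a b hab)
      convert h2 using 2 <;> (push_cast; ring)
  | pred m ih =>
      intro a b hab
      have h2 := move3 hind hitU _ _ (ih a b hab)
      convert h2 using 2 <;> (push_cast; ring)

include hind hitU hitD in
lemma skewMove : ∀ (n a b : ℤ), (a, b) ∈ S → (a + 2 * n, b - n) ∈ S := by
  intro n
  induction n using Int.induction_on with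
  | zero => intro a b hab; simpa using hab
  | succ m ih =>
      intro a b hab
      have h2 := move2 hind hitU _ _ (ih a b hab)
      convert h2 using 2 <;> (push_cast; ring)
  | pred m ih =>
      intro a b hab
      have h2 := move4 hind hitD _ _ (ih a b hab)
      convert h2 using 2 <;> (push_cast; ring)

end Closure

lemma zmod3_add3 (x : ℤ) : ((x + 3 : ℤ) : ZMod 3) = (x : ZMod 3) := by
  push_cast
  simp [show (3 : ZMod 3) = 0 from rfl]

lemma dense_periodic (c : ZMod 3) : IsPeriodic 3 3 (DenseState c) := by
  constructor <;> intro p <;> simp only [DenseState, Set.mem_setOf_eq]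
  · rw [show p.1 + 3 + 2 * p.2 = (p.1 + 2 * p.2) + 3 by ring, zmod3_add3]
  · rw [show p.1 + 2 * (p.2 + 3) = ((p.1 + 2 * p.2) + 3) + 3 by ring, zmod3_add3, zmod3_add3]

lemma dense_MIS (c : ZMod 3) : IsMIS (DenseState c) := by
  constructor
  · intro u hu v hv hadj
    simp only [DenseState, Set.mem_setOf_eq] at hu hv
    have h0 : (((u.1 + 2 * u.2) - (v.1 + 2 * v.2) : ℤ) : ZMod 3) = 0 := by
      push_cast at hu hv ⊢
      linear_combination hu - hv
    have hdvd : (3 : ℤ) ∣ (u.1 + 2 * u.2) - (v.1 + 2 * v.2) := by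
      exact_mod_cast (ZMod.intCast_zmod_eq_zero_iff_dvd _ 3).mp h0
    rw [triAdj_iff] at hadj
    omega
  · intro u hu
    simp only [DenseState, Set.mem_setOf_eq] at hu
    have hcase : ((u.1 + 2 * u.2 : ℤ) : ZMod 3) = c + 1 ∨
        ((u.1 + 2 * u.2 : ℤ) : ZMod 3) = c + 2 := by
      revert hu
      generalize ((u.1 + 2 * u.2 : ℤ) : ZMod 3) = x
      revert x
      revert c
      decide
    rcases hcase with h1 | h2
    · refine ⟨(u.1 - 1, u.2), ?_, ?_⟩
      · simp only [DenseState, Set.mem_setOf_eq]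
        push_cast at h1 ⊢
        linear_combination h1
      · have : TriAdj (u.1, u.2) (u.1 - 1, u.2) := mkAdj _ _ _ _ (by omega)
        simpa using this
    · refine ⟨(u.1 + 1, u.2), ?_, ?_⟩
      · simp only [DenseState, Set.mem_setOf_eq]
        push_cast at h2 ⊢
        have h3 : (3 : ZMod 3) = 0 := by decide
        linear_combination h2 + h3
      · have : TriAdj (u.1, u.2) (u.1 + 1, u.2) := mkAdj _ _ _ _ (by omega)
        simpa using this

open Classical in
lemma dense_card (c : ZMod 3) :
    (DenseState c ∩ FundDomain 3 3).ncard = 3 := by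
  classical
  have h : DenseState c ∩ FundDomain 3 3 =
      ↑((Finset.Ico (0:ℤ) 3 ×ˢ Finset.Ico (0:ℤ) 3).filter
        (fun p => ((p.1 + 2 * p.2 : ℤ) : ZMod 3) = c)) := by
    ext p
    simp [DenseState, FundDomain, Finset.mem_filter, Finset.mem_product, Finset.mem_Ico,
      Set.mem_inter_iff, and_comm]
    tauto
  rw [h, Set.ncard_coe_finset]
  fin_cases c <;> decide

lemma dense_distinct (c c' : ZMod 3) (h : c ≠ c') : DenseState c ≠ DenseState c' := by
  intro heq
  have h0 := Set.ext_iff.mp heq (0, 0)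
  have h1 := Set.ext_iff.mp heq (1, 0)
  simp only [DenseState, Set.mem_setOf_eq] at h0 h1
  push_cast at h0 h1
  clear heq
  revert h0 h1 h
  revert c c'
  decide

end AuxDensePGS

/-- There are exactly 3 periodic maximal independent sets of the triangular
lattice of density `1/3`: they are the sets `{(i,j) : i + 2j ≡ c (mod 3)}`,
`c ∈ {0,1,2}`, and these three sets are pairwise distinct. -/
theorem dense_PGS_classification :
    (∀ S : Set (ℤ × ℤ),
        (∃ v₁ v₂ : ℤ, 1 ≤ v₁ ∧ 1 ≤ v₂ ∧ IsPeriodic v₁ v₂ S ∧ IsMIS S ∧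
            3 * ((S ∩ FundDomain v₁ v₂).ncard : ℤ) = v₁ * v₂) ↔
          ∃ c : ZMod 3, S = DenseState c) ∧
    (∀ c c' : ZMod 3, c ≠ c' → DenseState c ≠ DenseState c') := by
  constructor
  · intro S
    constructor
    · rintro ⟨v₁, v₂, hv₁, hv₂, hper, ⟨hind, hmax⟩, hcnt⟩
      classical
      set Sf := (Finset.Ico (0:ℤ) v₁ ×ˢ Finset.Ico (0:ℤ) v₂).filter (fun p => p ∈ S) with hSfdef
      have hSfmem : ∀ p : ℤ × ℤ, p ∈ Sf ↔ p ∈ S ∧ 0 ≤ p.1 ∧ p.1 < v₁ ∧ 0 ≤ p.2 ∧ p.2 < v₂ := by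
        intro p
        simp [hSfdef, Finset.mem_filter, Finset.mem_product, Finset.mem_Ico]
        tauto
      have hSet : S ∩ FundDomain v₁ v₂ = ↑Sf := by
        ext p
        simp only [Set.mem_inter_iff, FundDomain, Set.mem_setOf_eq, Finset.coe_filter,
          Finset.mem_coe, hSfmem p]
        try tauto
      rw [hSet, Set.ncard_coe_finset] at hcnt
      have hpos : 0 < v₁ * v₂ := mul_pos (by omega) (by omega)
      have hSfne : Sf.Nonempty := by
        rw [Finset.nonempty_iff_ne_empty]
        intro he
        rw [he] at hcnt
        simp at hcnt
        omega
      obtain ⟨s₀, hs₀f⟩ := hSfne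
      have hs₀ : s₀ ∈ S := ((hSfmem s₀).mp hs₀f).1
      have hv₁2 : 2 ≤ v₁ := by
        by_contra hc
        have hv1 : v₁ = 1 := by omega
        have h2 := (hper.1 s₀).mp hs₀
        exact absurd (mkAdj _ _ _ _ (by omega))
          (hind (s₀.1 + v₁, s₀.2) h2 (s₀.1, s₀.2) (by simpa using hs₀))
      have hv₂2 : 2 ≤ v₂ := by
        by_contra hc
        have hv1 : v₂ = 1 := by omega
        have h2 := (hper.2 s₀).mp hs₀
        exact absurd (mkAdj _ _ _ _ (by omega))
          (hind (s₀.1, s₀.2 + v₂) h2 (s₀.1, s₀.2) (by simpa using hs₀))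
      set wN := v₁.toNat with hwN
      set hN := v₂.toNat with hhN
      have hwv : (wN : ℤ) = v₁ := Int.toNat_of_nonneg (by omega)
      have hhv : (hN : ℤ) = v₂ := Int.toNat_of_nonneg (by omega)
      have hw1 : 1 < wN := by omega
      have hh1 : 1 < hN := by omega
      have hmem := mem_iff_pi hper (by omega) (by omega) wN hN hwv hhv Sf hSfmem
      have hinj : Set.InjOn (tpi wN hN) ↑Sf := by
        intro x hx y hy hxy
        have hx' := (hSfmem x).mp (Finset.mem_coe.mp hx)
        have hy' := (hSfmem y).mp (Finset.mem_coe.mp hy)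
        have h1 : (x.1 : ZMod wN) = (y.1 : ZMod wN) := congrArg Prod.fst hxy
        have h2 : (x.2 : ZMod hN) = (y.2 : ZMod hN) := congrArg Prod.snd hxy
        have hd1 : v₁ ∣ x.1 - y.1 := by
          rw [← hwv, ← ZMod.intCast_zmod_eq_zero_iff_dvd]
          push_cast
          rw [h1]
          ring
        have hd2 : v₂ ∣ x.2 - y.2 := by
          rw [← hhv, ← ZMod.intCast_zmod_eq_zero_iff_dvd]
          push_cast
          rw [h2]
          ring
        have e1 : x.1 - y.1 = 0 :=
          Int.eq_zero_of_dvd_of_natAbs_lt_natAbs hd1 (by omega)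
        have e2 : x.2 - y.2 = 0 :=
          Int.eq_zero_of_dvd_of_natAbs_lt_natAbs hd2 (by omega)
        exact Prod.ext_iff.mpr ⟨by omega, by omega⟩
      have hcardA : (Sf.image (tpi wN hN)).card = Sf.card := Finset.card_image_of_injOn hinj
      have hcardA2 : 3 * (Sf.image (tpi wN hN)).card = wN * hN := by
        have hz : (3 * (Sf.image (tpi wN hN)).card : ℤ) = (wN : ℤ) * (hN : ℤ) := by
          rw [hcardA, hwv, hhv]
          exact_mod_cast hcnt
        exact_mod_cast hz
      have hhits := hits hind hw1 hh1 (Sf.image (tpi wN hN)) hmem hcardA2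
      have hitU : ∀ a b : ℤ, (a, b) ∈ S ∨ (a + 1, b) ∈ S ∨ (a, b + 1) ∈ S :=
        fun a b => (hhits a b).1
      have hitD : ∀ a b : ℤ, (a + 1, b) ∈ S ∨ (a, b + 1) ∈ S ∨ (a + 1, b + 1) ∈ S :=
        fun a b => (hhits a b).2
      refine ⟨((s₀.1 + 2 * s₀.2 : ℤ) : ZMod 3), ?_⟩
      have hsub : ∀ p : ℤ × ℤ,
          ((p.1 + 2 * p.2 : ℤ) : ZMod 3) = ((s₀.1 + 2 * s₀.2 : ℤ) : ZMod 3) → p ∈ S := by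
        intro p hp
        have h0 : (((p.1 + 2 * p.2) - (s₀.1 + 2 * s₀.2) : ℤ) : ZMod 3) = 0 := by
          push_cast at hp ⊢
          linear_combination hp
        have hdvd : (3 : ℤ) ∣ (p.1 + 2 * p.2) - (s₀.1 + 2 * s₀.2) := by
          exact_mod_cast (ZMod.intCast_zmod_eq_zero_iff_dvd _ 3).mp h0
        obtain ⟨t, ht⟩ := hdvd
        have h1 := skewMove hind hitU hitD (t - (p.2 - s₀.2)) _ _
          (diagMove hind hitU hitD t s₀.1 s₀.2 (by simpa using hs₀))
        have hp2 : p = (s₀.1 + t + 2 * (t - (p.2 - s₀.2)), s₀.2 + t - (t - (p.2 - s₀.2))) :=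
          Prod.ext_iff.mpr ⟨by omega, by omega⟩
        rw [hp2]
        exact h1
      have hsup : ∀ p ∈ S, ((p.1 + 2 * p.2 : ℤ) : ZMod 3) = ((s₀.1 + 2 * s₀.2 : ℤ) : ZMod 3) := by
        intro p hp
        by_contra hne
        have hcase : ((p.1 + 2 * p.2 : ℤ) : ZMod 3) = ((s₀.1 + 2 * s₀.2 : ℤ) : ZMod 3) + 1 ∨
            ((p.1 + 2 * p.2 : ℤ) : ZMod 3) = ((s₀.1 + 2 * s₀.2 : ℤ) : ZMod 3) + 2 := by
          revert hne
          generalize ((p.1 + 2 * p.2 : ℤ) : ZMod 3) = x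
          generalize ((s₀.1 + 2 * s₀.2 : ℤ) : ZMod 3) = y
          revert x y
          decide
        rcases hcase with h1 | h2
        · have hq : (p.1 - 1, p.2) ∈ S := by
            apply hsub
            push_cast at h1 ⊢
            linear_combination h1
          exact absurd (mkAdj _ _ _ _ (by omega))
            (hind (p.1, p.2) (by simpa using hp) (p.1 - 1, p.2) hq)
        · have hq : (p.1 + 1, p.2) ∈ S := by
            apply hsub
            push_cast at h2 ⊢
            have h3 : (3 : ZMod 3) = 0 := by decide
            linear_combination h2 + h3
          exact absurd (mkAdj _ _ _ _ (by omega))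
            (hind (p.1, p.2) (by simpa using hp) (p.1 + 1, p.2) hq)
      ext p
      simp only [DenseState, Set.mem_setOf_eq]
      exact ⟨fun hp => hsup p hp, fun hp => hsub p hp⟩
    · rintro ⟨c, rfl⟩
      refine ⟨3, 3, by norm_num, by norm_num, dense_periodic c, dense_MIS c, ?_⟩
      rw [dense_card c]
      norm_num
  · exact dense_distinct
end

section
/- Every maximal configuration on a rectangle is compatible: if n, m ≥ 1 and T ⊆ Λ_{n,m} is a maximal configuration on Λ_{n,m}, then there exists a maximal independent set S of ℤ² (with the triangular-lattice adjacency) such that S ∩ Λ_{n,m} = T. -/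
/-- The box `{a,…,b} × {c,…,d} ⊆ ℤ²`. -/
def Box (a b c d : ℤ) : Set (ℤ × ℤ) :=
  {p | a ≤ p.1 ∧ p.1 ≤ b ∧ c ≤ p.2 ∧ p.2 ≤ d}

/-- The rectangle `Λ_{n,m} = {1,…,n} × {1,…,m}`. -/
def Rect (n m : ℤ) : Set (ℤ × ℤ) := Box 1 n 1 m

/-- `T` is a maximal configuration on the region `Λ`: `T ⊆ Λ`, `T` is
independent, and every site of `Λ \ T` has a neighbor in `T`. -/
def IsMaxConfig (Λ T : Set (ℤ × ℤ)) : Prop :=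
  T ⊆ Λ ∧ IsIndependent T ∧ ∀ u ∈ Λ \ T, ∃ v ∈ T, TriAdj u v

/-- `T` is a compatible configuration on the region `Λ`: it is the restriction
to `Λ` of some maximal independent set of the whole lattice. -/
def IsCompatConfig (Λ T : Set (ℤ × ℤ)) : Prop :=
  ∃ S : Set (ℤ × ℤ), IsMIS S ∧ S ∩ Λ = T

lemma triAdj_symm {u v : ℤ × ℤ} (h : TriAdj u v) : TriAdj v u := by
  simp only [TriAdj, Finset.mem_insert, Finset.mem_singleton, Prod.mk.injEq] at h ⊢
  omega

lemma triAdj_irrefl (u : ℤ × ℤ) : ¬ TriAdj u u := by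
  simp only [TriAdj, Finset.mem_insert, Finset.mem_singleton, Prod.mk.injEq]
  omega

/-- Every maximal configuration on a rectangle is compatible: it extends to a
maximal independent set of the whole triangular lattice. -/
theorem maxConfig_compatible (n m : ℤ) (hn : 1 ≤ n) (hm : 1 ≤ m)
    (T : Set (ℤ × ℤ)) (hT : IsMaxConfig (Rect n m) T) :
    ∃ S : Set (ℤ × ℤ), IsMIS S ∧ S ∩ Rect n m = T := by
  obtain ⟨hTsub, hTind, hTdom⟩ := hT
  have hub : ∀ c ⊆ {S : Set (ℤ × ℤ) | IsIndependent S}, IsChain (· ⊆ ·) c → c.Nonempty →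
      ∃ ub ∈ {S : Set (ℤ × ℤ) | IsIndependent S}, ∀ s ∈ c, s ⊆ ub := by
    intro c hcS hchain _
    refine ⟨⋃₀ c, ?_, fun s hs => Set.subset_sUnion_of_mem hs⟩
    rintro a ⟨s, hs, has⟩ b ⟨t, ht, hbt⟩ hab
    rcases hchain.total hs ht with h | h
    · exact hcS ht a (h has) b hbt hab
    · exact hcS hs a has b (h hbt) hab
  obtain ⟨S, hTS, hSmem, hSmax⟩ :=
    zorn_subset_nonempty {S : Set (ℤ × ℤ) | IsIndependent S} hub T hTind
  refine ⟨S, ⟨hSmem, ?_⟩, ?_⟩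
  · intro u hu
    by_contra hno
    push_neg at hno
    have hind : IsIndependent (insert u S) := by
      intro a ha b hb hab
      rcases ha with rfl | ha
      · rcases hb with rfl | hb
        · exact triAdj_irrefl _ hab
        · exact hno b hb hab
      · rcases hb with rfl | hb
        · exact hno a ha (triAdj_symm hab)
        · exact hSmem a ha b hb hab
    have := hSmax hind (Set.subset_insert u S)
    exact hu (this (Set.mem_insert u S))
  · apply Set.Subset.antisymm
    · rintro u ⟨huS, huR⟩
      by_contra huT
      obtain ⟨v, hvT, hadj⟩ := hTdom u ⟨huR, huT⟩
      exact hSmem u huS v (hTS hvT) hadj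
    · intro u hu
      exact ⟨hTS hu, hTsub hu⟩
end

section
/- The recoverable system X(𝔸) is strongly irreducible with r = 4: for any two finite sets A, B ⊆ ℤ² such that the triangular-lattice graph distance between every point of A and every point of B is at least 4, and any two maximal independent sets S and T of ℤ², there exists a maximal independent set U of ℤ² with U ∩ A = S ∩ A and U ∩ B = T ∩ B. -/
/-- The triangular lattice as a simple graph on `ℤ × ℤ`. -/
def triGraph : SimpleGraph (ℤ × ℤ) where
  Adj := TriAdj
  symm := by
    constructor
    intro u v h
    simp only [TriAdj, Finset.mem_insert, Finset.mem_singleton, Prod.mk.injEq] at h ⊢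
    omega
  loopless := by
    constructor
    intro u h
    simp only [TriAdj, Finset.mem_insert, Finset.mem_singleton, Prod.mk.injEq] at h
    omega

/-- Closed neighborhood of a set. -/
def clN (A : Set (ℤ × ℤ)) : Set (ℤ × ℤ) := {u | ∃ a ∈ A, u = a ∨ TriAdj u a}

lemma walk1 {x y : ℤ × ℤ} (h : x = y ∨ TriAdj x y) :
    ∃ w : triGraph.Walk x y, w.length ≤ 1 := by
  rcases h with rfl | h
  · exact ⟨SimpleGraph.Walk.nil, by simp⟩
  · exact ⟨SimpleGraph.Walk.cons (show triGraph.Adj x y from h) SimpleGraph.Walk.nil, by simp⟩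

lemma dist_le_three {a u v b : ℤ × ℤ} (h1 : u = a ∨ TriAdj u a)
    (h2 : TriAdj u v) (h3 : v = b ∨ TriAdj v b) : triGraph.dist a b ≤ 3 := by
  obtain ⟨w1, hw1⟩ := walk1 (h1.imp Eq.symm triAdj_symm)
  obtain ⟨w3, hw3⟩ := walk1 h3
  have hd := triGraph.dist_le
    (w1.append ((SimpleGraph.Walk.cons (show triGraph.Adj u v from h2) SimpleGraph.Walk.nil).append w3))
  simp [SimpleGraph.Walk.length_append] at hd
  omega

lemma dist_le_one {a b : ℤ × ℤ} (h : a = b ∨ TriAdj a b) : triGraph.dist a b ≤ 1 := by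
  obtain ⟨w, hw⟩ := walk1 h
  exact le_trans (triGraph.dist_le w) hw

/-- Strong irreducibility of the recoverable system `X(𝔸)` with `r = 4`: any
two maximal independent sets can be glued along finite sets at graph distance
at least 4. -/
theorem strongly_irreducible (A B : Set (ℤ × ℤ)) (hA : A.Finite) (hB : B.Finite)
    (hdist : ∀ a ∈ A, ∀ b ∈ B, 4 ≤ triGraph.dist a b)
    (S T : Set (ℤ × ℤ)) (hS : IsMIS S) (hT : IsMIS T) :
    ∃ U : Set (ℤ × ℤ), IsMIS U ∧ U ∩ A = S ∩ A ∧ U ∩ B = T ∩ B := by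
  classical
  set V : Set (ℤ × ℤ) := (S ∩ clN A) ∪ (T ∩ clN B) with hV
  -- no edge between clN A and clN B
  have cross : ∀ u ∈ clN A, ∀ v ∈ clN B, ¬ TriAdj u v := by
    rintro u ⟨a, ha, hua⟩ v ⟨b, hb, hvb⟩ hadj
    have := dist_le_three hua hadj hvb
    have := hdist a ha b hb
    omega
  -- A is disjoint from clN B, and B from clN A
  have hAB : ∀ a ∈ A, a ∉ clN B := by
    rintro a ha ⟨b, hb, hab⟩
    have := dist_le_one hab
    have := hdist a ha b hb
    omega
  have hBA : ∀ b ∈ B, b ∉ clN A := by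
    rintro b hb ⟨a, ha, hba⟩
    have h1 : triGraph.dist a b ≤ 1 := by
      rcases hba with rfl | h
      · exact dist_le_one (Or.inl rfl)
      · exact dist_le_one (Or.inr (triAdj_symm h))
    have := hdist a ha b hb
    omega
  have hVind : IsIndependent V := by
    rintro u (⟨huS, huA⟩ | ⟨huT, huB⟩) v (⟨hvS, hvA⟩ | ⟨hvT, hvB⟩) hadj
    · exact hS.1 u huS v hvS hadj
    · exact cross u huA v hvB hadj
    · exact cross v hvA u huB (triAdj_symm hadj)
    · exact hT.1 u huT v hvT hadj
  -- Zorn: extend V to a maximal independent set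
  set 𝒮 : Set (Set (ℤ × ℤ)) := {W | IsIndependent W ∧ V ⊆ W} with h𝒮
  obtain ⟨U, hVU, hUmax⟩ := zorn_subset_nonempty 𝒮 (by
    intro c hc hchain hcne
    refine ⟨⋃₀ c, ⟨?_, ?_⟩, fun s hs => Set.subset_sUnion_of_mem hs⟩
    · rintro u ⟨c1, hc1, hu⟩ v ⟨c2, hc2, hv⟩ hadj
      rcases hchain.total hc1 hc2 with h | h
      · exact (hc hc2).1 u (h hu) v hv hadj
      · exact (hc hc1).1 u hu v (h hv) hadj
    · obtain ⟨s, hs⟩ := hcne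
      exact (hc hs).2.trans (Set.subset_sUnion_of_mem hs)) V ⟨hVind, le_refl V⟩
  have hUind : IsIndependent U := hUmax.prop.1
  have hUmis : IsMIS U := by
    refine ⟨hUind, fun u hu => ?_⟩
    by_contra hno
    push_neg at hno
    have hins : insert u U ∈ 𝒮 := by
      refine ⟨?_, hUmax.prop.2.trans (Set.subset_insert u U)⟩
      rintro x (rfl | hx) y (rfl | hy) hadj
      · exact triAdj_irrefl _ hadj
      · exact hno _ hy hadj
      · exact hno _ hx (triAdj_symm hadj)
      · exact hUind _ hx _ hy hadj
    have := hUmax.eq_of_le hins (Set.subset_insert u U)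
    exact hu (this ▸ Set.mem_insert u U)
  refine ⟨U, hUmis, ?_, ?_⟩
  · ext a
    constructor
    · rintro ⟨haU, haA⟩
      refine ⟨?_, haA⟩
      by_contra haS
      obtain ⟨s, hsS, hadj⟩ := hS.2 a haS
      have hsV : s ∈ V := Or.inl ⟨hsS, a, haA, Or.inr (triAdj_symm hadj)⟩
      exact hUind a haU s (hVU hsV) hadj
    · rintro ⟨haS, haA⟩
      exact ⟨hVU (Or.inl ⟨haS, a, haA, Or.inl rfl⟩), haA⟩
  · ext b
    constructor
    · rintro ⟨hbU, hbB⟩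
      refine ⟨?_, hbB⟩
      by_contra hbT
      obtain ⟨t, htT, hadj⟩ := hT.2 b hbT
      have htV : t ∈ V := Or.inr ⟨htT, b, hbB, Or.inr (triAdj_symm hadj)⟩
      exact hUind b hbU t (hVU htV) hadj
    · rintro ⟨hbT, hbB⟩
      exact ⟨hVU (Or.inr ⟨hbT, b, hbB, Or.inl rfl⟩), hbB⟩
end

section
/- Two maximal rectangle configurations separated by one empty row can be glued into a maximal configuration: let n, m ≥ 1, let T₁ be a maximal configuration on R₁ := {1,…,n} × {1,…,m} and let T₂ be a maximal configuration on R₂ := {1,…,n} × {m+2,…,2m+1} (i.e., T₂ − (0, m+1) is a maximal configuration on Λ_{n,m}). Then there exists a maximal (hence compatible) configuration U on Λ_{n,2m+1} := {1,…,n} × {1,…,2m+1} such that U ∩ R₁ = T₁ and U ∩ R₂ = T₂. -/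
/-- Greedy left-to-right selection among "bad" columns. -/
def glueF (bad : ℤ → Prop) : ℕ → Prop
  | 0 => False
  | (k + 1) => bad ((k : ℤ) + 1) ∧ ¬ glueF bad k

lemma glueF_bad (bad : ℤ → Prop) : ∀ k : ℕ, glueF bad k → bad (k : ℤ) := by
  intro k hk
  cases k with
  | zero => exact absurd hk (by simp [glueF])
  | succ j => push_cast; exact hk.1

lemma glueF_not_succ (bad : ℤ → Prop) (k : ℕ) (h : glueF bad k)
    (h' : glueF bad (k + 1)) : False := h'.2 h

/-- Two maximal rectangle configurations separated by one empty row can be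
glued into a maximal configuration on the larger rectangle. -/
theorem glue_maxConfigs (n m : ℤ) (hn : 1 ≤ n) (hm : 1 ≤ m)
    (T₁ T₂ : Set (ℤ × ℤ))
    (hT₁ : IsMaxConfig (Box 1 n 1 m) T₁)
    (hT₂ : IsMaxConfig (Box 1 n (m + 2) (2 * m + 1)) T₂) :
    ∃ U : Set (ℤ × ℤ), IsMaxConfig (Box 1 n 1 (2 * m + 1)) U ∧
      U ∩ Box 1 n 1 m = T₁ ∧ U ∩ Box 1 n (m + 2) (2 * m + 1) = T₂ := by
  classical
  obtain ⟨hT₁sub, hT₁ind, hT₁max⟩ := hT₁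
  obtain ⟨hT₂sub, hT₂ind, hT₂max⟩ := hT₂
  -- a column x is "bad" if the middle-row site (x, m+1) has no neighbor in T₁ ∪ T₂
  set bad : ℤ → Prop := fun x =>
    1 ≤ x ∧ x ≤ n ∧ ∀ v ∈ T₁ ∪ T₂, ¬ TriAdj (x, m + 1) v with hbad_def
  set M : Set (ℤ × ℤ) :=
    {p | p.2 = m + 1 ∧ ∃ k : ℕ, p.1 = (k : ℤ) ∧ glueF bad k} with hM_def
  set U : Set (ℤ × ℤ) := T₁ ∪ T₂ ∪ M with hU_def
  have hMmem : ∀ p : ℤ × ℤ, p ∈ M ↔ p.2 = m + 1 ∧ ∃ k : ℕ, p.1 = (k : ℤ) ∧ glueF bad k := by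
    intro p; rw [hM_def]; exact Iff.rfl
  have hMbad : ∀ p ∈ M, bad p.1 ∧ p.2 = m + 1 := by
    intro p hp
    rw [hMmem] at hp
    obtain ⟨k, hk, hf⟩ := hp.2
    exact ⟨hk ▸ glueF_bad bad k hf, hp.1⟩
  -- y-coordinate bounds
  have hy₁ : ∀ p ∈ T₁, 1 ≤ p.1 ∧ p.1 ≤ n ∧ 1 ≤ p.2 ∧ p.2 ≤ m := fun p hp => hT₁sub hp
  have hy₂ : ∀ p ∈ T₂, 1 ≤ p.1 ∧ p.1 ≤ n ∧ m + 2 ≤ p.2 ∧ p.2 ≤ 2 * m + 1 :=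
    fun p hp => hT₂sub hp
  refine ⟨U, ⟨?_, ?_, ?_⟩, ?_, ?_⟩
  · -- U ⊆ Box
    rintro p ((hp | hp) | hp)
    · obtain ⟨h1, h2, h3, h4⟩ := hy₁ p hp; exact ⟨h1, h2, h3, by omega⟩
    · obtain ⟨h1, h2, h3, h4⟩ := hy₂ p hp; exact ⟨h1, h2, by omega, h4⟩
    · obtain ⟨⟨h1, h2, _⟩, hy⟩ := hMbad p hp
      exact ⟨h1, h2, by omega, by omega⟩
  · -- Independence
    rintro u ((hu | hu) | hu) v ((hv | hv) | hv) hadj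
    · exact hT₁ind u hu v hv hadj
    · -- T₁ vs T₂
      have h1 := (hy₁ u hu).2.2.2; have h2 := (hy₂ v hv).2.2.1
      rw [triAdj_iff] at hadj; omega
    · -- T₁ vs M
      obtain ⟨⟨_, _, hb⟩, hy⟩ := hMbad v hv
      exact hb u (Set.mem_union_left _ hu) (by
        have : v = (v.1, m + 1) := by rw [← hy]
        rw [← this]; exact triAdj_symm hadj)
    · have h1 := (hy₂ u hu).2.2.1; have h2 := (hy₁ v hv).2.2.2
      rw [triAdj_iff] at hadj; omega
    · exact hT₂ind u hu v hv hadj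
    · obtain ⟨⟨_, _, hb⟩, hy⟩ := hMbad v hv
      exact hb u (Set.mem_union_right _ hu) (by
        have : v = (v.1, m + 1) := by rw [← hy]
        rw [← this]; exact triAdj_symm hadj)
    · obtain ⟨⟨_, _, hb⟩, hy⟩ := hMbad u hu
      exact hb v (Set.mem_union_left _ hv) (by
        have : u = (u.1, m + 1) := by rw [← hy]
        rw [← this]; exact hadj)
    · obtain ⟨⟨_, _, hb⟩, hy⟩ := hMbad u hu
      exact hb v (Set.mem_union_right _ hv) (by
        have : u = (u.1, m + 1) := by rw [← hy]
        rw [← this]; exact hadj)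
    · -- M vs M
      rw [hMmem] at hu hv
      obtain ⟨hyu, k, hku, hfk⟩ := hu
      obtain ⟨hyv, j, hjv, hfj⟩ := hv
      rw [triAdj_iff] at hadj
      have : (k : ℤ) = (j : ℤ) + 1 ∨ (j : ℤ) = (k : ℤ) + 1 := by omega
      rcases this with h | h
      · have : k = j + 1 := by omega
        exact glueF_not_succ bad j hfj (this ▸ hfk)
      · have : j = k + 1 := by omega
        exact glueF_not_succ bad k hfk (this ▸ hfj)
  · -- Maximality
    rintro u ⟨⟨hx1, hx2, hy1, hy2⟩, huU⟩
    rcases lt_trichotomy u.2 (m + 1) with hy | hy | hy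
    · -- bottom rectangle
      have hu₁ : u ∈ Box 1 n 1 m := ⟨hx1, hx2, hy1, by omega⟩
      have : u ∉ T₁ := fun h => huU (Or.inl (Or.inl h))
      obtain ⟨v, hv, hadj⟩ := hT₁max u ⟨hu₁, this⟩
      exact ⟨v, Or.inl (Or.inl hv), hadj⟩
    · -- middle row
      by_cases hc : ∃ v ∈ T₁ ∪ T₂, TriAdj u v
      · obtain ⟨v, hv, hadj⟩ := hc
        exact ⟨v, Or.inl hv, hadj⟩
      · push_neg at hc
        have hue : u = (u.1, m + 1) := by
          rw [Prod.ext_iff]; exact ⟨rfl, hy⟩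
        have hb : bad u.1 := ⟨hx1, hx2, fun v hv => hue ▸ hc v hv⟩
        obtain ⟨j, hj⟩ : ∃ j : ℕ, u.1 = (j : ℤ) + 1 := ⟨(u.1 - 1).toNat, by omega⟩
        have hnot : ¬ glueF bad (j + 1) := by
          intro hf
          refine huU (Or.inr ?_)
          rw [hMmem]
          exact ⟨hy, j + 1, by push_cast; omega, hf⟩
        have hbj : bad ((j : ℤ) + 1) := hj ▸ hb
        have hfj : glueF bad j := by
          by_contra h
          exact hnot ⟨hbj, h⟩
        refine ⟨((j : ℤ), m + 1), Or.inr ((hMmem _).2 ⟨rfl, j, rfl, hfj⟩), ?_⟩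
        rw [triAdj_iff]; simp only []; omega
    · -- top rectangle
      have hu₂ : u ∈ Box 1 n (m + 2) (2 * m + 1) := ⟨hx1, hx2, by omega, hy2⟩
      have : u ∉ T₂ := fun h => huU (Or.inl (Or.inr h))
      obtain ⟨v, hv, hadj⟩ := hT₂max u ⟨hu₂, this⟩
      exact ⟨v, Or.inl (Or.inr hv), hadj⟩
  · -- U ∩ bottom box = T₁
    ext p
    constructor
    · rintro ⟨(hp | hp) | hp, hbox⟩
      · exact hp
      · have := (hy₂ p hp).2.2.1; have := hbox.2.2.2; omega
      · have := (hMbad p hp).2; have := hbox.2.2.2; omega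
    · intro hp
      exact ⟨Or.inl (Or.inl hp), hT₁sub hp⟩
  · -- U ∩ top box = T₂
    ext p
    constructor
    · rintro ⟨(hp | hp) | hp, hbox⟩
      · have := (hy₁ p hp).2.2.2; have := hbox.2.2.1; omega
      · exact hp
      · have := (hMbad p hp).2; have := hbox.2.2.1; omega
    · intro hp
      exact ⟨Or.inl (Or.inr hp), hT₂sub hp⟩
end

section
/- Block-tiling lower bound for the number of compatible configurations: for all n, m ≥ 1 and all k ≥ 1, the number of compatible configurations on the rectangle Λ_{k(n+1), k(m+1)} satisfies |X_{Λ_{k(n+1),k(m+1)}}| ≥ |M_{Λ_{n,m}}|^{k²}. -/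
/-- The set of maximal configurations on the region `Λ`. -/
def MaxConfigs (Λ : Set (ℤ × ℤ)) : Set (Set (ℤ × ℤ)) := {T | IsMaxConfig Λ T}

/-- The set of compatible configurations on the region `Λ`. -/
def CompatConfigs (Λ : Set (ℤ × ℤ)) : Set (Set (ℤ × ℤ)) := {T | IsCompatConfig Λ T}

/- ### Auxiliary material -/

lemma triAdj_bounds {u v : ℤ × ℤ} (h : TriAdj u v) :
    (-1 ≤ u.1 - v.1 ∧ u.1 - v.1 ≤ 1) ∧ (-1 ≤ u.2 - v.2 ∧ u.2 - v.2 ≤ 1) := by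
  simp only [TriAdj, Finset.mem_insert, Finset.mem_singleton, Prod.mk.injEq] at h
  omega

lemma triAdj_tr (c u v : ℤ × ℤ) :
    TriAdj (u.1 + c.1, u.2 + c.2) (v.1 + c.1, v.2 + c.2) ↔ TriAdj u v := by
  have h1 : u.1 + c.1 - (v.1 + c.1) = u.1 - v.1 := by ring
  have h2 : u.2 + c.2 - (v.2 + c.2) = u.2 - v.2 := by ring
  simp only [TriAdj, h1, h2]

/-- Translation of a set of sites. -/
def tr (c : ℤ × ℤ) (S : Set (ℤ × ℤ)) : Set (ℤ × ℤ) :=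
  (fun p => (p.1 + c.1, p.2 + c.2)) '' S

lemma tr_injective (c : ℤ × ℤ) : Function.Injective (tr c) := by
  apply Set.image_injective.2
  intro p q h
  have h1 := congrArg Prod.fst h
  have h2 := congrArg Prod.snd h
  simp only at h1 h2
  exact Prod.ext (by linarith) (by linarith)

lemma tr_mono {c : ℤ × ℤ} {S T : Set (ℤ × ℤ)} (h : S ⊆ T) : tr c S ⊆ tr c T :=
  Set.image_mono h

/-- Any independent set extends to a maximal independent set (Zorn). -/
lemma exists_mis_extension {U : Set (ℤ × ℤ)} (hU : IsIndependent U) :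
    ∃ S, IsMIS S ∧ U ⊆ S := by
  obtain ⟨S, hUS, hmem, hmax⟩ :=
    zorn_subset_nonempty {S | IsIndependent S}
      (fun c hc hchain _ => by
        refine ⟨⋃₀ c, ?_, fun s hs => Set.subset_sUnion_of_mem hs⟩
        rintro u ⟨s, hs, hus⟩ v ⟨t, ht, hvt⟩
        rcases hchain.total hs ht with hst | hts
        · exact hc ht u (hst hus) v hvt
        · exact hc hs u hus v (hts hvt)) U hU
  refine ⟨S, ⟨hmem, fun u hu => ?_⟩, hUS⟩
  by_contra hno
  push_neg at hno
  have hind : IsIndependent (insert u S) := by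
    intro x hx y hy
    rcases Set.mem_insert_iff.1 hx with rfl | hx' <;>
      rcases Set.mem_insert_iff.1 hy with rfl | hy'
    · exact triAdj_irrefl _
    · exact fun h => hno y hy' h
    · exact fun h => hno _ hx' (triAdj_symm h)
    · exact hmem x hx' y hy'
  exact hu (hmax hind (Set.subset_insert u S) (Set.mem_insert u S))

/-- If integer shifts by multiples of `n+1` keep two points of `[1,n]` within
distance `1`, the multiples agree. -/
lemma shift_eq {n a b x y d : ℤ} (hn : 1 ≤ n) (hx1 : 1 ≤ x) (hxn : x ≤ n)
    (hy1 : 1 ≤ y) (hyn : y ≤ n) (hd : d = x - y + (a - b) * (n + 1))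
    (hd1 : -1 ≤ d) (hd2 : d ≤ 1) : a = b := by
  rcases lt_trichotomy a b with h | h | h
  · exfalso
    have h1 : a + 1 ≤ b := h
    nlinarith [mul_le_mul_of_nonneg_right (by linarith : a - b ≤ -1)
      (by linarith : (0:ℤ) ≤ n + 1)]
  · exact h
  · exfalso
    have h1 : b + 1 ≤ a := h
    nlinarith [mul_le_mul_of_nonneg_right (by linarith : 1 ≤ a - b)
      (by linarith : (0:ℤ) ≤ n + 1)]

/-- Key tiling lemma: given maximal configurations on the `k²` blocks, there is
a compatible configuration on the big rectangle whose restriction to each block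
is the given configuration. -/
lemma key_tiling (n m : ℤ) (hn : 1 ≤ n) (hm : 1 ≤ m) (k : ℕ)
    (t : Fin k → Fin k → Set (ℤ × ℤ))
    (ht : ∀ i j, IsMaxConfig (Rect n m) (t i j)) :
    ∃ C ∈ CompatConfigs (Rect ((k : ℤ) * (n + 1)) ((k : ℤ) * (m + 1))),
      ∀ i j : Fin k, C ∩ tr (((i : ℕ) : ℤ) * (n + 1), ((j : ℕ) : ℤ) * (m + 1)) (Rect n m)
           = tr (((i : ℕ) : ℤ) * (n + 1), ((j : ℕ) : ℤ) * (m + 1)) (t i j) := by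
  classical
  set cc : Fin k → Fin k → ℤ × ℤ :=
    fun i j => (((i : ℕ) : ℤ) * (n + 1), ((j : ℕ) : ℤ) * (m + 1)) with hcc
  set U : Set (ℤ × ℤ) := ⋃ i, ⋃ j, tr (cc i j) (t i j) with hUdef
  have hsubRect : ∀ i j, t i j ⊆ Rect n m := fun i j => (ht i j).1
  -- independence of the union
  have hUind : IsIndependent U := by
    intro u hu v hv hadj
    simp only [hUdef, Set.mem_iUnion] at hu hv
    obtain ⟨i, j, u0, hu0, rfl⟩ := hu
    obtain ⟨i', j', v0, hv0, rfl⟩ := hv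
    obtain ⟨hu1, hu2, hu3, hu4⟩ := hsubRect i j hu0
    obtain ⟨hv1, hv2, hv3, hv4⟩ := hsubRect i' j' hv0
    obtain ⟨⟨hb1, hb2⟩, hb3, hb4⟩ := triAdj_bounds hadj
    simp only [hcc] at hb1 hb2 hb3 hb4
    have hii : ((i : ℕ) : ℤ) = ((i' : ℕ) : ℤ) :=
      shift_eq hn hu1 hu2 hv1 hv2 (by ring) hb1 hb2
    have hjj : ((j : ℕ) : ℤ) = ((j' : ℕ) : ℤ) :=
      shift_eq hm hu3 hu4 hv3 hv4 (by ring) hb3 hb4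
    have hi : i = i' := Fin.ext (by exact_mod_cast hii)
    have hj : j = j' := Fin.ext (by exact_mod_cast hjj)
    subst hi; subst hj
    rw [hcc] at hadj
    rw [triAdj_tr] at hadj
    exact (ht i j).2.1 u0 hu0 v0 hv0 hadj
  -- each translated block lies in the big rectangle
  have hblk : ∀ i j : Fin k,
      tr (cc i j) (Rect n m) ⊆ Rect ((k : ℤ) * (n + 1)) ((k : ℤ) * (m + 1)) := by
    rintro i j p ⟨q, hq, rfl⟩
    obtain ⟨h1, h2, h3, h4⟩ := hq
    have hik : ((i : ℕ) : ℤ) ≤ (k : ℤ) - 1 := by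
      have := i.isLt; omega
    have hjk : ((j : ℕ) : ℤ) ≤ (k : ℤ) - 1 := by
      have := j.isLt; omega
    have hi0 : (0 : ℤ) ≤ ((i : ℕ) : ℤ) := Int.natCast_nonneg _
    have hj0 : (0 : ℤ) ≤ ((j : ℕ) : ℤ) := Int.natCast_nonneg _
    refine ⟨?_, ?_, ?_, ?_⟩
    · simp only [hcc]; nlinarith
    · simp only [hcc]
      nlinarith [mul_le_mul_of_nonneg_right hik (by linarith : (0:ℤ) ≤ n + 1)]
    · simp only [hcc]; nlinarith
    · simp only [hcc]
      nlinarith [mul_le_mul_of_nonneg_right hjk (by linarith : (0:ℤ) ≤ m + 1)]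
  -- extend to a MIS
  obtain ⟨S, hS, hUS⟩ := exists_mis_extension hUind
  refine ⟨S ∩ Rect ((k : ℤ) * (n + 1)) ((k : ℤ) * (m + 1)), ⟨S, hS, rfl⟩, ?_⟩
  intro i j
  have htrU : tr (cc i j) (t i j) ⊆ U := by
    intro p hp
    exact Set.mem_iUnion.2 ⟨i, Set.mem_iUnion.2 ⟨j, hp⟩⟩
  ext p
  constructor
  · rintro ⟨⟨hpS, _⟩, q, hq, rfl⟩
    by_cases hqt : q ∈ t i j
    · exact ⟨q, hqt, rfl⟩
    · exfalso
      obtain ⟨v, hv, hadj⟩ := (ht i j).2.2 q ⟨hq, hqt⟩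
      have hvS : (v.1 + (cc i j).1, v.2 + (cc i j).2) ∈ S :=
        hUS (htrU ⟨v, hv, rfl⟩)
      exact hS.1 _ hpS _ hvS ((triAdj_tr (cc i j) q v).2 hadj)
  · rintro ⟨q, hq, rfl⟩
    refine ⟨⟨hUS (htrU ⟨q, hq, rfl⟩), hblk i j ⟨q, hsubRect i j hq, rfl⟩⟩,
      q, hsubRect i j hq, rfl⟩

lemma rect_finite (a b : ℤ) : (Rect a b).Finite := by
  apply (Set.finite_Icc ((1 : ℤ), (1 : ℤ)) (a, b)).subset
  rintro p ⟨h1, h2, h3, h4⟩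
  simp only [Set.mem_Icc, Prod.le_def]
  exact ⟨⟨h1, h3⟩, ⟨h2, h4⟩⟩

/-- Block-tiling lower bound: the number of compatible configurations on
`Λ_{k(n+1),k(m+1)}` is at least `|M_{Λ_{n,m}}|^{k²}`. -/
theorem compat_block_lower_bound (n m : ℤ) (hn : 1 ≤ n) (hm : 1 ≤ m)
    (k : ℕ) (hk : 1 ≤ k) :
    (MaxConfigs (Rect n m)).ncard ^ (k ^ 2) ≤
      (CompatConfigs (Rect ((k : ℤ) * (n + 1)) ((k : ℤ) * (m + 1)))).ncard := by
  classical
  set A := MaxConfigs (Rect n m) with hA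
  set B := CompatConfigs (Rect ((k : ℤ) * (n + 1)) ((k : ℤ) * (m + 1))) with hB
  have hAfin : A.Finite :=
    ((rect_finite n m).finite_subsets).subset (fun T hT => hT.1)
  have hBfin : B.Finite := by
    apply ((rect_finite ((k : ℤ) * (n + 1)) ((k : ℤ) * (m + 1))).finite_subsets).subset
    rintro T ⟨S, _, rfl⟩
    exact Set.inter_subset_right
  haveI := hAfin.to_subtype
  haveI := hBfin.to_subtype
  have hF : ∀ t : Fin k → Fin k → ↥A, ∃ C : ↥B,
      ∀ i j : Fin k, (C : Set (ℤ × ℤ)) ∩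
          tr (((i : ℕ) : ℤ) * (n + 1), ((j : ℕ) : ℤ) * (m + 1)) (Rect n m)
        = tr (((i : ℕ) : ℤ) * (n + 1), ((j : ℕ) : ℤ) * (m + 1))
            ((t i j : Set (ℤ × ℤ))) := by
    intro t
    obtain ⟨C, hC, hrec⟩ := key_tiling n m hn hm k
      (fun i j => ((t i j : Set (ℤ × ℤ)))) (fun i j => (t i j).2)
    exact ⟨⟨C, hC⟩, hrec⟩
  choose F hFrec using hF
  have hFinj : Function.Injective F := by
    intro t t' h
    funext i j
    have h1 := hFrec t i j
    have h2 := hFrec t' i j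
    rw [h, h2] at h1
    exact Subtype.ext (tr_injective _ h1.symm)
  have hle : Nat.card (Fin k → Fin k → ↥A) ≤ Nat.card ↥B :=
    Nat.card_le_card_of_injective F hFinj
  have hcard : Nat.card (Fin k → Fin k → ↥A) = A.ncard ^ (k ^ 2) := by
    rw [Nat.card_fun, Nat.card_fun]
    simp [Nat.card_coe_set_eq, ← pow_mul, pow_two]
  rw [hcard, Nat.card_coe_set_eq] at hle
  exact hle
end

section
/- Defective Delaunay triangles of a maximal independent set have area at most 3√3/2: let S ⊆ ℤ² be a maximal independent set of the triangular lattice, and let u, v, w ∈ S be distinct sites whose embedded images f(u), f(v), f(w) are not collinear. Suppose there exist c ∈ ℝ² and r > 0 with ‖f(u) − c‖ = ‖f(v) − c‖ = ‖f(w) − c‖ = r and ‖f(s) − c‖ ≥ r for every s ∈ S (i.e., the open circumdisk of the triangle contains no point of f(S)). If the triangle f(u)f(v)f(w) is not an equilateral triangle of side length √7, then its area is at most 3√3/2. -/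
/-- Embedding of the triangular lattice into the Euclidean plane (identified
with `ℂ`): `f(i,j) = i·(1,0) + j·(1/2, √3/2)`. -/
noncomputable def emb (p : ℤ × ℤ) : ℂ :=
  ⟨(p.1 : ℝ) + (p.2 : ℝ) / 2, (p.2 : ℝ) * Real.sqrt 3 / 2⟩

/-- The area of the triangle with vertices `a`, `b`, `c` in the plane `ℂ`. -/
noncomputable def triArea (a b c : ℂ) : ℝ :=
  |((b - a) * (starRingEnd ℂ) (c - a)).im| / 2

section AuxLemmas

private lemma normsq_complex' (z : ℂ) : ‖z‖^2 = z.re^2 + z.im^2 := by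
  rw [Complex.sq_norm, Complex.normSq_apply]; ring

private lemma circ_id' (a1 b1 a2 b2 a3 b3 r : ℝ)
    (h1 : a1^2 + b1^2 = r^2) (h2 : a2^2 + b2^2 = r^2) (h3 : a3^2 + b3^2 = r^2) :
    ((a1-a2)^2+(b1-b2)^2) * ((a2-a3)^2+(b2-b3)^2) * ((a1-a3)^2+(b1-b3)^2)
      = 4*r^2*((a2-a1)*(b3-b1) - (b2-b1)*(a3-a1))^2 := by
  linear_combination ((-3)*b3^2*r^2 + (1)*b3^4 + (1)*a3^2*r^2 + (2)*a3^2*b3^2 + (1)*a3^4 + (6)*b2*b3*r^2 + (-2)*b2*b3^3 + (-2)*b2*a3^2*b3 + (-3)*b2^2*r^2 + (2)*b2^2*b3^2 + (2)*b2^2*a3^2 + (-2)*b2^3*b3 + (1)*b2^4 + (-2)*a2*a3*r^2 + (2)*a2*a3*b3^2 + (2)*a2*a3^3 + (-8)*a2*b2*a3*b3 + (2)*a2*b2^2*a3 + (1)*a2^2*r^2 + (2)*a2^2*b3^2 + (-6)*a2^2*a3^2 + (-2)*a2^2*b2*b3 + (2)*a2^2*b2^2 + (2)*a2^3*a3 +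 (1)*a2^4 + (-2)*b1*b3^3 + (-2)*b1*a3^2*b3 + (2)*b1*b2*b3^2 + (-2)*b1*b2*a3^2 + (2)*b1*b2^2*b3 + (-2)*b1*b2^3 + (4)*b1*a2*a3*b3 + (4)*b1*a2*b2*a3 + (-2)*b1*a2^2*b3 + (-2)*b1*a2^2*b2 + (1)*b1^2*b3^2 + (1)*b1^2*a3^2 + (-2)*b1^2*b2*b3 + (1)*b1^2*b2^2 + (-2)*b1^2*a2*a3 + (1)*b1^2*a2^2 + (-2)*a1*a3*b3^2 + (-2)*a1*a3^3 + (4)*a1*b2*a3*b3 + (-2)*a1*b2^2*a3 + (-2)*a1*a2*b3^2 + (2)*a1*a2*a3^2 + (4)*a1*a2*b2*b3 + (-2)*a1*a2*b2^2 + (2)*a1*a2^2*a3 + (-2)*a1*a2^3 + (1)*a1^2*b3^2 + (1)*a1^2*a3^2 + (-2)*a1^2*b2*b3 + (1)*a1^2*b2^2 + (-2)*a1^2*a2*a3 + (1)*a1^2*a2^2) * h1 +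
    ((2)*r^4 + (-1)*b3^2*r^2 + (1)*b3^4 + (-5)*a3^2*r^2 + (2)*a3^2*b3^2 + (1)*a3^4 + (-2)*b2*b3*r^2 + (-2)*b2*b3^3 + (-2)*b2*a3^2*b3 + (1)*b2^2*r^2 + (1)*b2^2*b3^2 + (1)*b2^2*a3^2 + (2)*a2*a3*r^2 + (-2)*a2*a3*b3^2 + (-2)*a2*a3^3 + (1)*a2^2*r^2 + (1)*a2^2*b3^2 + (1)*a2^2*a3^2 + (4)*b1*b3*r^2 + (-2)*b1*b3^3 + (-2)*b1*a3^2*b3 + (-2)*b1*b2*r^2 + (2)*b1*b2*b3^2 + (-2)*b1*b2*a3^2 + (-2)*b1*b2^2*b3 + (4)*b1*a2*a3*b3 + (-2)*b1*a2^2*b3 + (-4)*b1^2*r^2 + (8)*b1^2*a3^2 + (4)*b1^2*b2*b3 + (-4)*b1^2*a2*a3 + (2)*a1*a3*b3^2 + (2)*a1*a3^3 + (4)*a1*b2*a3*b3 + (-2)*a1*b2^2*a3 + (-2)*a1*a2*r^2 + (-2)*a1*a2*b3^2 + (2)*a1*a2*a3^2 + (-2)*a1*a2^2*a3 + (-8)*a1*b1*a3*b3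 + (4)*a1*b1*b2*a3 + (4)*a1*b1*a2*b3) * h2 +
    ((-2)*r^4 + (2)*b3^2*r^2 + (2)*a3^2*r^2 + (-4)*b2*b3*r^2 + (4)*b2^2*r^2 + (-4)*b1*b3*r^2 + (2)*b1*b2*r^2 + (-2)*b1*b2*b3^2 + (-2)*b1*b2*a3^2 + (4)*b1*b2^2*b3 + (4)*b1*a2*b2*a3 + (4)*b1^2*r^2 + (4)*b1^2*b2*b3 + (-8)*b1^2*b2^2 + (-4)*b1^2*a2*a3 + (-4)*a1*b2^2*a3 + (2)*a1*a2*r^2 + (-2)*a1*a2*b3^2 + (-2)*a1*a2*a3^2 + (4)*a1*a2*b2*b3 + (4)*a1*b1*b2*a3 + (4)*a1*b1*a2*b3 + (-8)*a1*b1*a2*b2) * h3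

/-- The circumradius identity `a²b²c² = 4R²·(2·area)²` for three points on a
circle of radius `r` around `c`. -/
private lemma circ_id2 (x y z c : ℂ) (r : ℝ)
    (hx : ‖x - c‖ = r) (hy : ‖y - c‖ = r) (hz : ‖z - c‖ = r) :
    ‖x - y‖^2 * ‖y - z‖^2 * ‖x - z‖^2
      = 4*r^2*((y-x).re*(z-x).im - (y-x).im*(z-x).re)^2 := by
  have h1 : (x.re - c.re)^2 + (x.im - c.im)^2 = r^2 := by
    rw [← Complex.sub_re, ← Complex.sub_im, ← normsq_complex', hx]
  have h2 : (y.re - c.re)^2 + (y.im - c.im)^2 = r^2 := by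
    rw [← Complex.sub_re, ← Complex.sub_im, ← normsq_complex', hy]
  have h3 : (z.re - c.re)^2 + (z.im - c.im)^2 = r^2 := by
    rw [← Complex.sub_re, ← Complex.sub_im, ← normsq_complex', hz]
  simp only [normsq_complex', Complex.sub_re, Complex.sub_im]
  linear_combination circ_id' (x.re - c.re) (x.im - c.im) (y.re - c.re) (y.im - c.im)
    (z.re - c.re) (z.im - c.im) r h1 h2 h3

/-- Values of the quadratic form `a² + ab + b²` between 3 and 11. -/
private lemma form_vals' (a b : ℤ) (h3 : 3 ≤ a^2 + a*b + b^2) (h11 : a^2 + a*b + b^2 ≤ 11) :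
    a^2 + a*b + b^2 = 3 ∨ a^2 + a*b + b^2 = 4 ∨ a^2 + a*b + b^2 = 7 ∨ a^2 + a*b + b^2 = 9 := by
  have hb : b^2 ≤ 14 := by nlinarith [sq_nonneg (2*a+b)]
  have hb1 : -3 ≤ b := by nlinarith
  have hb2 : b ≤ 3 := by nlinarith
  have ha0 : (2*a+b)^2 ≤ 44 := by nlinarith
  have ha1 : -4 ≤ a := by nlinarith
  have ha2 : a ≤ 4 := by nlinarith
  interval_cases a <;> interval_cases b <;> omega

/-- Nonzero, non-adjacent lattice vectors have squared length at least 3. -/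
private lemma form_min' (a b : ℤ) (hne : ¬(a = 0 ∧ b = 0))
    (hadj : (a, b) ∉ ({(1, 0), (-1, 0), (0, 1), (0, -1), (1, -1), (-1, 1)} : Finset (ℤ × ℤ))) :
    3 ≤ a^2 + a*b + b^2 := by
  by_contra h
  push_neg at h
  have h2 : a^2 + a*b + b^2 ≤ 2 := by omega
  have hb : b^2 ≤ 2 := by nlinarith [sq_nonneg (2*a+b)]
  have hb1 : -1 ≤ b := by nlinarith
  have hb2 : b ≤ 1 := by nlinarith
  have ha0 : (2*a+b)^2 ≤ 8 := by nlinarith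
  have ha1 : -1 ≤ a := by nlinarith
  have ha2 : a ≤ 1 := by nlinarith
  simp only [Finset.mem_insert, Finset.mem_singleton, Prod.mk.injEq] at hadj
  interval_cases a <;> interval_cases b <;> omega

/-- The combinatorial core: the only lattice-realizable squared side lengths
with determinant exceeding 6 are the equilateral triangles of side √7 and 3. -/
private lemma key_comb' (A B C D : ℤ)
    (hA : A = 3 ∨ A = 4 ∨ A = 7 ∨ A = 9)
    (hB : B = 3 ∨ B = 4 ∨ B = 7 ∨ B = 9)
    (hC : C = 3 ∨ C = 4 ∨ C = 7 ∨ C = 9)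
    (hD : 3*(D*D) = 2*(A*B+B*C+C*A) - A*A - B*B - C*C) :
    D*D ≤ 36 ∨ (A = 7 ∧ B = 7 ∧ C = 7) ∨ (A = 9 ∧ B = 9 ∧ C = 9) := by
  have h57 : D*D ≠ 57 := by
    intro h
    have h1 : D ≤ 7 := by nlinarith
    have h2 : -7 ≤ D := by nlinarith
    interval_cases D <;> omega
  have ht : 0 ≤ D*D := mul_self_nonneg D
  set t := D*D with htdef
  clear_value t
  rcases hA with rfl|rfl|rfl|rfl <;> rcases hB with rfl|rfl|rfl|rfl <;>
    rcases hC with rfl|rfl|rfl|rfl <;> omega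

end AuxLemmas

section AuxLemmas2

private lemma emb_re' (p : ℤ × ℤ) : (emb p).re = (p.1 : ℝ) + (p.2 : ℝ) / 2 := rfl
private lemma emb_im' (p : ℤ × ℤ) : (emb p).im = (p.2 : ℝ) * Real.sqrt 3 / 2 := rfl

/-- Squared distances in the embedded lattice are given by the quadratic form
`a² + ab + b²`. -/
private lemma normsq_emb_sub' (p q : ℤ × ℤ) :
    ‖emb p - emb q‖^2 =
      (((p.1-q.1)^2 + (p.1-q.1)*(p.2-q.2) + (p.2-q.2)^2 : ℤ) : ℝ) := by
  have h3 : Real.sqrt 3 ^ 2 = 3 := Real.sq_sqrt (by norm_num)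
  rw [normsq_complex', Complex.sub_re, Complex.sub_im, emb_re', emb_im', emb_re', emb_im']
  push_cast
  linear_combination (((p.2:ℝ) - q.2)^2/4) * h3

/-- Every point of the plane is within distance `√7/4` of a lattice point. -/
private lemma covering' (c : ℂ) : ∃ p : ℤ × ℤ, ‖emb p - c‖ ≤ Real.sqrt 7 / 4 := by
  set j : ℤ := round (c.im * 2 / Real.sqrt 3) with hj
  set i : ℤ := round (c.re - (j:ℝ)/2) with hi
  refine ⟨(i, j), ?_⟩
  have him : |(emb (i,j) - c).im| ≤ Real.sqrt 3 / 4 := by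
    have h1 : |(c.im * 2 / Real.sqrt 3) - (j:ℝ)| ≤ 1/2 := by
      rw [hj]; exact abs_sub_round _
    have h3pos : (0:ℝ) < Real.sqrt 3 := Real.sqrt_pos.mpr (by norm_num)
    have he : (emb (i,j) - c).im = -(Real.sqrt 3 / 2) * ((c.im * 2 / Real.sqrt 3) - (j:ℝ)) := by
      rw [Complex.sub_im, emb_im']
      field_simp
      ring
    rw [he, abs_mul, abs_neg, abs_of_pos (by positivity)]
    nlinarith [abs_nonneg ((c.im * 2 / Real.sqrt 3) - (j:ℝ))]
  have hre : |(emb (i,j) - c).re| ≤ 1/2 := by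
    have h1 : |(c.re - (j:ℝ)/2) - (i:ℝ)| ≤ 1/2 := by rw [hi]; exact abs_sub_round _
    have he : (emb (i,j) - c).re = -((c.re - (j:ℝ)/2) - (i:ℝ)) := by
      rw [Complex.sub_re, emb_re']; ring
    rw [he, abs_neg]; exact h1
  have h3 : Real.sqrt 3 ^ 2 = 3 := Real.sq_sqrt (by norm_num)
  have hn2 : ‖emb (i,j) - c‖^2 ≤ 7/16 := by
    rw [normsq_complex']
    nlinarith [abs_nonneg (emb (i,j) - c).re, abs_nonneg (emb (i,j) - c).im,
      sq_abs (emb (i,j) - c).re, sq_abs (emb (i,j) - c).im]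
  have h7 : (Real.sqrt 7 / 4)^2 = 7/16 := by
    rw [div_pow, Real.sq_sqrt (by norm_num : (0:ℝ) ≤ 7)]; norm_num
  nlinarith [norm_nonneg (emb (i,j) - c), Real.sqrt_nonneg 7]

/-- Adjacent lattice points are at distance 1 in the embedding. -/
private lemma adj_dist' (p q : ℤ × ℤ) (h : TriAdj p q) : ‖emb p - emb q‖ = 1 := by
  have h2 : ‖emb p - emb q‖^2 = 1 := by
    rw [normsq_emb_sub']
    unfold TriAdj at h
    simp only [Finset.mem_insert, Finset.mem_singleton, Prod.mk.injEq] at h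
    have he : ((p.1-q.1)^2 + (p.1-q.1)*(p.2-q.2) + (p.2-q.2)^2 : ℤ) = 1 := by
      rcases h with ⟨h1,h2⟩|⟨h1,h2⟩|⟨h1,h2⟩|⟨h1,h2⟩|⟨h1,h2⟩|⟨h1,h2⟩ <;>
        rw [h1, h2] <;> ring
    rw [he]; norm_num
  nlinarith [norm_nonneg (emb p - emb q)]

/-- The lattice cross product in the embedding. -/
private lemma cross_emb' (u v w : ℤ × ℤ) :
    (emb v - emb u).re * (emb w - emb u).im - (emb v - emb u).im * (emb w - emb u).re
      = Real.sqrt 3 / 2 * (((v.1-u.1)*(w.2-u.2) - (v.2-u.2)*(w.1-u.1) : ℤ) : ℝ) := by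
  simp only [Complex.sub_re, Complex.sub_im, emb_re', emb_im']
  push_cast
  ring

private lemma im_mul_conj' (u v w : ℤ × ℤ) :
    ((emb v - emb u) * (starRingEnd ℂ) (emb w - emb u)).im
      = -(Real.sqrt 3 / 2) * (((v.1-u.1)*(w.2-u.2) - (v.2-u.2)*(w.1-u.1) : ℤ) : ℝ) := by
  rw [Complex.mul_im, Complex.conj_re, Complex.conj_im]
  linarith [cross_emb' u v w]

end AuxLemmas2

set_option maxHeartbeats 2000000 in
/-- A defective Delaunay triangle of a maximal independent set of the
triangular lattice has area at most `3√3/2`. -/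
theorem defective_triangle_area (S : Set (ℤ × ℤ)) (hS : IsMIS S)
    (u v w : ℤ × ℤ) (hu : u ∈ S) (hv : v ∈ S) (hw : w ∈ S)
    (huv : u ≠ v) (hvw : v ≠ w) (huw : u ≠ w)
    (hncol : ¬ Collinear ℝ ({emb u, emb v, emb w} : Set ℂ))
    (c : ℂ) (r : ℝ) (hr : 0 < r)
    (hcu : ‖emb u - c‖ = r) (hcv : ‖emb v - c‖ = r) (hcw : ‖emb w - c‖ = r)
    (hdelaunay : ∀ s ∈ S, r ≤ ‖emb s - c‖)
    (hdefective : ¬ (‖emb u - emb v‖ = Real.sqrt 7 ∧ ‖emb v - emb w‖ = Real.sqrt 7 ∧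
        ‖emb u - emb w‖ = Real.sqrt 7)) :
    triArea (emb u) (emb v) (emb w) ≤ 3 * Real.sqrt 3 / 2 := by
  have h3 : Real.sqrt 3 ^ 2 = 3 := Real.sq_sqrt (by norm_num)
  have h3nn : (0:ℝ) ≤ Real.sqrt 3 := Real.sqrt_nonneg 3
  have hs7 : Real.sqrt 7 ≤ 2.65 := by
    nlinarith [Real.sq_sqrt (show (0:ℝ) ≤ 7 by norm_num), Real.sqrt_nonneg 7]
  have hs7nn : (0:ℝ) ≤ Real.sqrt 7 := Real.sqrt_nonneg 7
  -- integer data of the triangle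
  set A : ℤ := (v.1-u.1)^2 + (v.1-u.1)*(v.2-u.2) + (v.2-u.2)^2 with hA
  set B : ℤ := (w.1-u.1)^2 + (w.1-u.1)*(w.2-u.2) + (w.2-u.2)^2 with hB
  set C : ℤ := (w.1-v.1)^2 + (w.1-v.1)*(w.2-v.2) + (w.2-v.2)^2 with hC
  set D : ℤ := (v.1-u.1)*(w.2-u.2) - (v.2-u.2)*(w.1-u.1) with hD
  have hAv : ‖emb v - emb u‖^2 = (A:ℝ) := normsq_emb_sub' v u
  have hBv : ‖emb w - emb u‖^2 = (B:ℝ) := normsq_emb_sub' w u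
  have hCv : ‖emb w - emb v‖^2 = (C:ℝ) := normsq_emb_sub' w v
  -- lower bounds from independence
  have hne : ∀ p q : ℤ × ℤ, p ≠ q → ¬ TriAdj p q →
      3 ≤ (p.1-q.1)^2 + (p.1-q.1)*(p.2-q.2) + (p.2-q.2)^2 := by
    intro p q hpq hadj
    apply form_min'
    · rintro ⟨e1, e2⟩
      exact hpq (Prod.ext_iff.mpr ⟨by omega, by omega⟩)
    · exact hadj
  have hA3 : 3 ≤ A := hne v u (Ne.symm huv) (hS.1 v hv u hu)
  have hB3 : 3 ≤ B := hne w u (Ne.symm huw) (hS.1 w hw u hu)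
  have hC3 : 3 ≤ C := hne w v (Ne.symm hvw) (hS.1 w hw v hv)
  -- circumradius bound from maximality
  have hrle : r ≤ 1 + Real.sqrt 7 / 4 := by
    obtain ⟨p, hp⟩ := covering' c
    by_cases hpS : p ∈ S
    · have := hdelaunay p hpS
      linarith
    · obtain ⟨s, hsS, hadj⟩ := hS.2 p hpS
      have h1 : ‖emb p - emb s‖ = 1 := adj_dist' p s hadj
      have h2 : r ≤ ‖emb s - c‖ := hdelaunay s hsS
      have h3' : ‖emb s - c‖ ≤ ‖emb s - emb p‖ + ‖emb p - c‖ := by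
        have he : emb s - c = (emb s - emb p) + (emb p - c) := by ring
        rw [he]; exact norm_add_le _ _
      have h4 : ‖emb s - emb p‖ = 1 := by rw [norm_sub_rev]; exact h1
      linarith
  have hrle' : r ≤ 1.6625 := by linarith
  have hr2 : r^2 ≤ 2.764 := by nlinarith
  -- upper bounds on squared side lengths
  have hub : ∀ x y : ℂ, ∀ N : ℤ, ‖x - c‖ = r → ‖y - c‖ = r → ‖x - y‖^2 = (N:ℝ) → N ≤ 11 := by
    intro x y N hx hy hN
    have h1 : ‖x - y‖ ≤ 2*r := by
      have he : x - y = (x - c) + (c - y) := by ring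
      have h2 : ‖c - y‖ = ‖y - c‖ := norm_sub_rev _ _
      calc ‖x - y‖ ≤ ‖x - c‖ + ‖c - y‖ := by rw [he]; exact norm_add_le _ _
        _ = 2*r := by rw [h2, hx, hy]; ring
    have h2 : (N:ℝ) ≤ 4*r^2 := by nlinarith [norm_nonneg (x - y)]
    have h3' : (N:ℝ) < 12 := by nlinarith
    have h4 : N < 12 := by exact_mod_cast h3'
    omega
  have hA11 : A ≤ 11 := hub (emb v) (emb u) A hcv hcu hAv
  have hB11 : B ≤ 11 := hub (emb w) (emb u) B hcw hcu hBv
  have hC11 : C ≤ 11 := hub (emb w) (emb v) C hcw hcv hCv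
  have hAval : A = 3 ∨ A = 4 ∨ A = 7 ∨ A = 9 := by
    rw [hA]; exact form_vals' (v.1-u.1) (v.2-u.2) hA3 hA11
  have hBval : B = 3 ∨ B = 4 ∨ B = 7 ∨ B = 9 := by
    rw [hB]; exact form_vals' (w.1-u.1) (w.2-u.2) hB3 hB11
  have hCval : C = 3 ∨ C = 4 ∨ C = 7 ∨ C = 9 := by
    rw [hC]; exact form_vals' (w.1-v.1) (w.2-v.2) hC3 hC11
  -- Heron identity in lattice coordinates
  have hHer : 3*(D*D) = 2*(A*B+B*C+C*A) - A*A - B*B - C*C := by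
    rw [hA, hB, hC, hD]; ring
  -- circumradius identity : A·C·B = 3 r² D²
  have hid : (A:ℝ) * (C:ℝ) * (B:ℝ) = 3 * r^2 * (D:ℝ)^2 := by
    have h0 := circ_id2 (emb u) (emb v) (emb w) c r hcu hcv hcw
    have hcr := cross_emb' u v w
    rw [← hD] at hcr
    rw [hcr] at h0
    have e1 : ‖emb u - emb v‖^2 = (A:ℝ) := by rw [norm_sub_rev]; exact hAv
    have e2 : ‖emb v - emb w‖^2 = (C:ℝ) := by rw [norm_sub_rev]; exact hCv
    have e3 : ‖emb u - emb w‖^2 = (B:ℝ) := by rw [norm_sub_rev]; exact hBv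
    rw [e1, e2, e3] at h0
    linear_combination h0 + r^2 * (D:ℝ)^2 * h3
  have hDim := im_mul_conj' u v w
  rw [← hD] at hDim
  clear_value A B C D
  -- case analysis
  rcases key_comb' A B C D hAval hBval hCval hHer with hD36 | ⟨h7A, h7B, h7C⟩ | ⟨h9A, h9B, h9C⟩
  · -- main case : |D| ≤ 6, so area = |D|·√3/4 ≤ 3√3/2
    have hArea : triArea (emb u) (emb v) (emb w) = Real.sqrt 3 / 4 * |(D:ℝ)| := by
      unfold triArea
      rw [hDim, abs_mul, abs_neg, abs_of_nonneg (by positivity : (0:ℝ) ≤ Real.sqrt 3 / 2)]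
      ring
    rw [hArea]
    have hDabs : |(D:ℝ)| ≤ 6 := by
      have h1 : (D:ℝ)^2 ≤ 36 := by
        have h2 : ((D*D : ℤ) : ℝ) ≤ 36 := by exact_mod_cast hD36
        push_cast at h2
        nlinarith [h2]
      nlinarith [abs_nonneg ((D:ℝ)), sq_abs ((D:ℝ))]
    nlinarith
  · -- equilateral of side √7 : contradicts defectiveness
    exfalso
    apply hdefective
    have key : ∀ x y : ℂ, ‖x - y‖^2 = (7:ℝ) → ‖x - y‖ = Real.sqrt 7 := by
      intro x y h
      rw [← Real.sqrt_sq (norm_nonneg (x - y)), h]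
    refine ⟨key _ _ ?_, key _ _ ?_, key _ _ ?_⟩
    · rw [norm_sub_rev, hAv, h7A]; norm_num
    · rw [norm_sub_rev, hCv, h7C]; norm_num
    · rw [norm_sub_rev, hBv, h7B]; norm_num
  · -- equilateral of side 3 : circumradius √3 is too large, contradiction
    exfalso
    have hD81 : D*D = 81 := by rw [h9A, h9B, h9C] at hHer; omega
    have hD81' : (D:ℝ)^2 = 81 := by
      have h2 : ((D*D : ℤ) : ℝ) = 81 := by exact_mod_cast hD81
      push_cast at h2
      nlinarith [h2]
    rw [h9A, h9B, h9C, hD81'] at hid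
    push_cast at hid
    nlinarith [hid, hr2]
end

section
/- Empty faces of a maximal independent set have between 2 and 4 empty connected neighbors: let S ⊆ ℤ² be a maximal independent set of the triangular lattice and let F be a face that is empty with respect to S. Then the number of faces that are connected to F and empty with respect to S is at least 2 and at most 4. -/
/-- A face (unit triangle) of the triangular lattice: a base point in `ℤ²`
together with an orientation (`true` = up-face, `false` = down-face). -/
abbrev Face : Type := (ℤ × ℤ) × Bool

/-- The vertex set of a face. -/
def faceVerts (F : Face) : Finset (ℤ × ℤ) :=
  if F.2 then {(F.1.1, F.1.2), (F.1.1 + 1, F.1.2), (F.1.1, F.1.2 + 1)}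
  else {(F.1.1 + 1, F.1.2), (F.1.1, F.1.2 + 1), (F.1.1 + 1, F.1.2 + 1)}

/-- Two distinct faces are adjacent if their vertex sets share at least one site. -/
def FaceAdjacent (F G : Face) : Prop :=
  F ≠ G ∧ (faceVerts F ∩ faceVerts G).Nonempty

/-- Two distinct faces are edge-connected if their vertex sets share exactly two sites. -/
def EdgeConnected (F G : Face) : Prop :=
  F ≠ G ∧ (faceVerts F ∩ faceVerts G).card = 2

/-- Two distinct faces are point-connected if their vertex sets share exactly
one site and no face is edge-connected to both of them. -/
def PointConnected (F G : Face) : Prop :=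
  F ≠ G ∧ (faceVerts F ∩ faceVerts G).card = 1 ∧
    ¬ ∃ H : Face, EdgeConnected H F ∧ EdgeConnected H G

/-- Two faces are connected if they are edge-connected or point-connected. -/
def FaceConnected (F G : Face) : Prop :=
  EdgeConnected F G ∨ PointConnected F G

/-- A face is empty with respect to `S` if none of its vertices lies in `S`. -/
def EmptyFace (S : Set (ℤ × ℤ)) (F : Face) : Prop :=
  ∀ v ∈ faceVerts F, v ∉ S

lemma mem_fv (x y p q : ℤ) (b : Bool) : (x,y) ∈ faceVerts ((p,q),b) ↔
    (b = true ∧ ((p=x∧q=y)∨(p=x-1∧q=y)∨(p=x∧q=y-1))) ∨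
    (b = false ∧ ((p=x-1∧q=y)∨(p=x∧q=y-1)∨(p=x-1∧q=y-1))) := by
  cases b <;> simp [faceVerts] <;> omega


set_option maxHeartbeats 2000000 in
lemma card2_class (p q : ℤ) (b : Bool)
    (h : (faceVerts ((0,0),true) ∩ faceVerts ((p,q),b)).card = 2) :
    b = false ∧ ((p=0∧q=0) ∨ (p=-1∧q=0) ∨ (p=0∧q=-1)) := by
  have h1 : 1 < (faceVerts ((0,0),true) ∩ faceVerts ((p,q),b)).card := by omega
  obtain ⟨⟨ux,uy⟩, hu, ⟨vx,vy⟩, hv, huv⟩ := Finset.one_lt_card.mp h1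
  rw [Finset.mem_inter] at hu hv
  have h3 : ¬(((0:ℤ),(0:ℤ)) ∈ faceVerts ((p,q),b) ∧ ((1:ℤ),(0:ℤ)) ∈ faceVerts ((p,q),b)
      ∧ ((0:ℤ),(1:ℤ)) ∈ faceVerts ((p,q),b)) := by
    rintro ⟨m1, m2, m3⟩
    have hsub : faceVerts ((0,0),true) ⊆ faceVerts ((0,0),true) ∩ faceVerts ((p,q),b) := by
      intro w hw
      rw [Finset.mem_inter]
      refine ⟨hw, ?_⟩
      have : w = ((0:ℤ),(0:ℤ)) ∨ w = (1,0) ∨ w = (0,1) := by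
        simpa [faceVerts] using hw
      rcases this with rfl | rfl | rfl <;> assumption
    have := Finset.card_le_card hsub
    rw [h] at this
    have h33 : (faceVerts ((0,0),(true:Bool))).card = 3 := by decide
    omega
  have hu1 := (mem_fv ux uy 0 0 true).mp hu.1
  have hv1 := (mem_fv vx vy 0 0 true).mp hv.1
  have hu2 := (mem_fv ux uy p q b).mp hu.2
  have hv2 := (mem_fv vx vy p q b).mp hv.2
  have huv' : ¬(ux = vx ∧ uy = vy) := by
    intro ⟨e1, e2⟩; exact huv (by rw [e1, e2])
  cases b
  · simp only [reduceCtorEq, false_and, true_and, false_or, or_false, eq_self_iff_true,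
      and_true] at hu1 hv1 hu2 hv2 ⊢
    omega
  · exfalso
    simp only [reduceCtorEq, false_and, true_and, or_false, false_or, eq_self_iff_true,
      and_true] at hu1 hv1 hu2 hv2
    have hp : p = 0 ∧ q = 0 := by omega
    obtain ⟨rfl, rfl⟩ := hp
    exact h3 ⟨by decide, by decide, by decide⟩


lemma emptyFace_iff (S : Set (ℤ×ℤ)) (p q : ℤ) :
    EmptyFace S ((p,q),false) ↔ ((p+1,q) ∉ S ∧ (p,q+1) ∉ S ∧ (p+1,q+1) ∉ S) := by
  unfold EmptyFace
  simp [faceVerts]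


set_option maxHeartbeats 2000000 in
lemma point_class (p q : ℤ) (b : Bool)
    (h1 : (faceVerts ((0,0),true) ∩ faceVerts ((p,q),b)).card = 1)
    (h2 : ¬ ∃ H : Face, EdgeConnected H ((0,0),true) ∧ EdgeConnected H ((p,q),b)) :
    b = false ∧ ((p=-1∧q=-1) ∨ (p=1∧q=-1) ∨ (p=-1∧q=1)) := by
  obtain ⟨⟨ux,uy⟩, he⟩ := Finset.card_eq_one.mp h1
  have hu : (ux,uy) ∈ faceVerts ((0,0),true) ∩ faceVerts ((p,q),b) := by
    rw [he]; exact Finset.mem_singleton_self _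
  rw [Finset.mem_inter] at hu
  have uniq : ∀ x y : ℤ, (x,y) ∈ faceVerts ((0,0),true) → (x,y) ∈ faceVerts ((p,q),b) →
      x = ux ∧ y = uy := by
    intro x y m1 m2
    have : (x,y) ∈ faceVerts ((0,0),true) ∩ faceVerts ((p,q),b) := Finset.mem_inter.mpr ⟨m1,m2⟩
    rw [he, Finset.mem_singleton] at this
    exact ⟨congrArg Prod.fst this, congrArg Prod.snd this⟩
  have hva := fun m => uniq 0 0 (by decide) m
  have hvb := fun m => uniq 1 0 (by decide) m
  have hvc := fun m => uniq 0 1 (by decide) m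
  rw [mem_fv] at hva hvb hvc
  have hu1 := (mem_fv ux uy 0 0 true).mp hu.1
  have hu2 := (mem_fv ux uy p q b).mp hu.2
  clear h1 he hu uniq
  cases b
  · simp only [reduceCtorEq, false_and, true_and, false_or, or_false, eq_self_iff_true,
      and_true] at hva hvb hvc hu1 hu2 ⊢
    omega
  · exfalso
    simp only [reduceCtorEq, false_and, true_and, false_or, or_false, eq_self_iff_true,
      and_true] at hva hvb hvc hu1 hu2
    have hc6 : (p=-1∧q=0)∨(p=0∧q=-1)∨(p=1∧q=0)∨(p=1∧q=-1)∨(p=0∧q=1)∨(p=-1∧q=1) := by omega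
    rcases hc6 with ⟨rfl,rfl⟩|⟨rfl,rfl⟩|⟨rfl,rfl⟩|⟨rfl,rfl⟩|⟨rfl,rfl⟩|⟨rfl,rfl⟩
    · exact h2 ⟨((-1,0),false), ⟨by decide, by decide⟩, ⟨by decide, by decide⟩⟩
    · exact h2 ⟨((0,-1),false), ⟨by decide, by decide⟩, ⟨by decide, by decide⟩⟩
    · exact h2 ⟨((0,0),false), ⟨by decide, by decide⟩, ⟨by decide, by decide⟩⟩
    · exact h2 ⟨((0,-1),false), ⟨by decide, by decide⟩, ⟨by decide, by decide⟩⟩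
    · exact h2 ⟨((0,0),false), ⟨by decide, by decide⟩, ⟨by decide, by decide⟩⟩
    · exact h2 ⟨((-1,0),false), ⟨by decide, by decide⟩, ⟨by decide, by decide⟩⟩


lemma conn_point (p q : ℤ) (hpq : (p=-1∧q=-1) ∨ (p=1∧q=-1) ∨ (p=-1∧q=1)) :
    FaceConnected ((0,0),true) ((p,q),false) := by
  refine Or.inr ⟨?_, ?_, ?_⟩
  · rcases hpq with ⟨rfl,rfl⟩|⟨rfl,rfl⟩|⟨rfl,rfl⟩ <;> decide
  · rcases hpq with ⟨rfl,rfl⟩|⟨rfl,rfl⟩|⟨rfl,rfl⟩ <;> decide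
  · rintro ⟨⟨⟨hx,hy⟩,hb⟩, hHF, hHG⟩
    have hcard : (faceVerts ((0,0),true) ∩ faceVerts ((hx,hy),hb)).card = 2 := by
      rw [Finset.inter_comm]; exact hHF.2
    obtain ⟨rfl, hd⟩ := card2_class hx hy hb hcard
    have := hHG.2
    rcases hpq with ⟨rfl,rfl⟩|⟨rfl,rfl⟩|⟨rfl,rfl⟩ <;>
      rcases hd with ⟨rfl,rfl⟩|⟨rfl,rfl⟩|⟨rfl,rfl⟩ <;> revert this <;> decide

lemma two_le_ncard {α : Type*} (X : Set α) (hf : X.Finite) (A B : α)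
    (hA : A ∈ X) (hB : B ∈ X) (hAB : A ≠ B) : 2 ≤ X.ncard := by
  have hsub : ({A, B} : Set α) ⊆ X := by rintro x (rfl | rfl) <;> assumption
  calc 2 = ({A,B} : Set α).ncard := (Set.ncard_pair hAB).symm
    _ ≤ X.ncard := Set.ncard_le_ncard hsub hf

theorem core (S : Set (ℤ×ℤ)) (hS : IsMIS S) (hF : EmptyFace S ((0,0),true)) :
    2 ≤ {G : Face | FaceConnected ((0,0),true) G ∧ EmptyFace S G}.ncard ∧
    {G : Face | FaceConnected ((0,0),true) G ∧ EmptyFace S G}.ncard ≤ 4 := by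
  set X := {G : Face | FaceConnected ((0,0),true) G ∧ EmptyFace S G} with hX
  set T : Finset Face := {((0,0),false),((-1,0),false),((0,-1),false),
    ((-1,-1),false),((1,-1),false),((-1,1),false)} with hT
  have hXT : ∀ G ∈ X, G ∈ T := by
    rintro ⟨⟨p,q⟩,b⟩ ⟨hc, _⟩
    rcases hc with ⟨_, hcard⟩ | ⟨_, hcard, hH⟩
    · obtain ⟨rfl, hd⟩ := card2_class p q b hcard
      rcases hd with ⟨rfl,rfl⟩|⟨rfl,rfl⟩|⟨rfl,rfl⟩ <;> decide
    · obtain ⟨rfl, hd⟩ := point_class p q b hcard hH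
      rcases hd with ⟨rfl,rfl⟩|⟨rfl,rfl⟩|⟨rfl,rfl⟩ <;> decide
  have hfin : X.Finite := Set.Finite.subset T.finite_toSet hXT
  have ha : ((0:ℤ),(0:ℤ)) ∉ S := hF _ (by decide)
  have hb : ((1:ℤ),(0:ℤ)) ∉ S := hF _ (by decide)
  have hc : ((0:ℤ),(1:ℤ)) ∉ S := hF _ (by decide)
  -- connectivity of the six faces
  have cE1 : FaceConnected ((0,0),true) ((0,0),false) := Or.inl ⟨by decide, by decide⟩
  have cE2 : FaceConnected ((0,0),true) ((-1,0),false) := Or.inl ⟨by decide, by decide⟩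
  have cE3 : FaceConnected ((0,0),true) ((0,-1),false) := Or.inl ⟨by decide, by decide⟩
  have cP1 : FaceConnected ((0,0),true) ((-1,-1),false) := conn_point _ _ (by norm_num)
  have cP2 : FaceConnected ((0,0),true) ((1,-1),false) := conn_point _ _ (by norm_num)
  have cP3 : FaceConnected ((0,0),true) ((-1,1),false) := conn_point _ _ (by norm_num)
  constructor
  · -- lower bound
    by_cases h3 : ((1:ℤ),(-1:ℤ)) ∈ S <;> by_cases h4 : ((-1:ℤ),(1:ℤ)) ∈ S <;>
      by_cases h6 : ((1:ℤ),(1:ℤ)) ∈ S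
    -- (3,4,6) : P1, P2
    · have hn1 : ((-1:ℤ),(0:ℤ)) ∉ S := fun h => hS.1 _ h4 _ h (by unfold TriAdj; decide)
      have hn2 : ((0:ℤ),(-1:ℤ)) ∉ S := fun h => hS.1 _ h3 _ h (by unfold TriAdj; decide)
      have hn5 : ((2:ℤ),(0:ℤ)) ∉ S := fun h => hS.1 _ h6 _ h (by unfold TriAdj; decide)
      have hn7 : ((2:ℤ),(-1:ℤ)) ∉ S := fun h => hS.1 _ h3 _ h (by unfold TriAdj; decide)
      exact two_le_ncard X hfin ((-1,-1),false) ((1,-1),false)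
        ⟨cP1, (emptyFace_iff S _ _).mpr (by norm_num; exact ⟨hn2, hn1, ha⟩)⟩
        ⟨cP2, (emptyFace_iff S _ _).mpr (by norm_num; exact ⟨hn7, hb, hn5⟩)⟩ (by decide)
    -- (3,4,¬6) : E1, P1
    · have hn1 : ((-1:ℤ),(0:ℤ)) ∉ S := fun h => hS.1 _ h4 _ h (by unfold TriAdj; decide)
      have hn2 : ((0:ℤ),(-1:ℤ)) ∉ S := fun h => hS.1 _ h3 _ h (by unfold TriAdj; decide)
      exact two_le_ncard X hfin ((0,0),false) ((-1,-1),false)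
        ⟨cE1, (emptyFace_iff S _ _).mpr (by norm_num; exact ⟨hb, hc, h6⟩)⟩
        ⟨cP1, (emptyFace_iff S _ _).mpr (by norm_num; exact ⟨hn2, hn1, ha⟩)⟩ (by decide)
    -- (3,¬4,6) : E2, P2
    · have hn5 : ((2:ℤ),(0:ℤ)) ∉ S := fun h => hS.1 _ h6 _ h (by unfold TriAdj; decide)
      have hn7 : ((2:ℤ),(-1:ℤ)) ∉ S := fun h => hS.1 _ h3 _ h (by unfold TriAdj; decide)
      exact two_le_ncard X hfin ((-1,0),false) ((1,-1),false)
        ⟨cE2, (emptyFace_iff S _ _).mpr (by norm_num; exact ⟨ha, h4, hc⟩)⟩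
        ⟨cP2, (emptyFace_iff S _ _).mpr (by norm_num; exact ⟨hn7, hb, hn5⟩)⟩ (by decide)
    -- (3,¬4,¬6) : E2, E1
    · exact two_le_ncard X hfin ((-1,0),false) ((0,0),false)
        ⟨cE2, (emptyFace_iff S _ _).mpr (by norm_num; exact ⟨ha, h4, hc⟩)⟩
        ⟨cE1, (emptyFace_iff S _ _).mpr (by norm_num; exact ⟨hb, hc, h6⟩)⟩ (by decide)
    -- (¬3,4,6) : E3, P3
    · have hn8 : ((0:ℤ),(2:ℤ)) ∉ S := fun h => hS.1 _ h6 _ h (by unfold TriAdj; decide)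
      have hn9 : ((-1:ℤ),(2:ℤ)) ∉ S := fun h => hS.1 _ h4 _ h (by unfold TriAdj; decide)
      exact two_le_ncard X hfin ((0,-1),false) ((-1,1),false)
        ⟨cE3, (emptyFace_iff S _ _).mpr (by norm_num; exact ⟨h3, ha, hb⟩)⟩
        ⟨cP3, (emptyFace_iff S _ _).mpr (by norm_num; exact ⟨hc, hn9, hn8⟩)⟩ (by decide)
    -- (¬3,4,¬6) : E3, E1
    · exact two_le_ncard X hfin ((0,-1),false) ((0,0),false)
        ⟨cE3, (emptyFace_iff S _ _).mpr (by norm_num; exact ⟨h3, ha, hb⟩)⟩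
        ⟨cE1, (emptyFace_iff S _ _).mpr (by norm_num; exact ⟨hb, hc, h6⟩)⟩ (by decide)
    -- (¬3,¬4,6) : E3, E2
    · exact two_le_ncard X hfin ((0,-1),false) ((-1,0),false)
        ⟨cE3, (emptyFace_iff S _ _).mpr (by norm_num; exact ⟨h3, ha, hb⟩)⟩
        ⟨cE2, (emptyFace_iff S _ _).mpr (by norm_num; exact ⟨ha, h4, hc⟩)⟩ (by decide)
    -- (¬3,¬4,¬6) : E3, E2
    · exact two_le_ncard X hfin ((0,-1),false) ((-1,0),false)
        ⟨cE3, (emptyFace_iff S _ _).mpr (by norm_num; exact ⟨h3, ha, hb⟩)⟩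
        ⟨cE2, (emptyFace_iff S _ _).mpr (by norm_num; exact ⟨ha, h4, hc⟩)⟩ (by decide)
  · -- upper bound
    have le4 : ∀ G1 G2 : Face, G1 ∈ T → G2 ∈ T → G1 ≠ G2 →
        ¬EmptyFace S G1 → ¬EmptyFace S G2 → X.ncard ≤ 4 := by
      intro G1 G2 hG1 hG2 hne hne1 hne2
      have h1 : X ⊆ (((T.erase G1).erase G2 : Finset Face) : Set Face) := by
        intro G hG
        simp only [Finset.coe_erase, Set.mem_diff, Set.mem_singleton_iff, Finset.mem_coe]
        exact ⟨⟨hXT G hG, fun e => hne1 (e ▸ hG.2)⟩, fun e => hne2 (e ▸ hG.2)⟩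
      have h2 := Set.ncard_le_ncard h1 (Finset.finite_toSet _)
      rw [Set.ncard_coe_finset] at h2
      have hm : G2 ∈ T.erase G1 := Finset.mem_erase.mpr ⟨Ne.symm hne, hG2⟩
      rw [Finset.card_erase_of_mem hm, Finset.card_erase_of_mem hG1] at h2
      have hT6 : T.card = 6 := by decide
      omega
    -- dominators of the three vertices
    obtain ⟨⟨vax,vay⟩, hvaS, hvaA⟩ := hS.2 (0,0) ha
    obtain ⟨⟨vbx,vby⟩, hvbS, hvbA⟩ := hS.2 (1,0) hb
    obtain ⟨⟨vcx,vcy⟩, hvcS, hvcA⟩ := hS.2 (0,1) hc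
    have hda : (vax=1∧vay=0)∨(vax=-1∧vay=0)∨(vax=0∧vay=1)∨(vax=0∧vay=-1)∨
        (vax=1∧vay=-1)∨(vax=-1∧vay=1) := by
      simp [TriAdj, Prod.ext_iff] at hvaA; omega
    have hdb : (vbx=2∧vby=0)∨(vbx=0∧vby=0)∨(vbx=1∧vby=1)∨(vbx=1∧vby=-1)∨
        (vbx=2∧vby=-1)∨(vbx=0∧vby=1) := by
      simp [TriAdj, Prod.ext_iff] at hvbA; omega
    have hdc : (vcx=1∧vcy=1)∨(vcx=-1∧vcy=1)∨(vcx=0∧vcy=2)∨(vcx=0∧vcy=0)∨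
        (vcx=1∧vcy=0)∨(vcx=-1∧vcy=2) := by
      simp [TriAdj, Prod.ext_iff] at hvcA; omega
    -- nonempty-face witnesses
    have hA : ∃ GA ∈ ({((-1,-1),false),((-1,0),false),((0,-1),false)} : Finset Face),
        ¬EmptyFace S GA := by
      rcases hda with ⟨rfl,rfl⟩|⟨rfl,rfl⟩|⟨rfl,rfl⟩|⟨rfl,rfl⟩|⟨rfl,rfl⟩|⟨rfl,rfl⟩
      · exact absurd hvaS hb
      · exact ⟨((-1,-1),false), by decide, fun hE => hE (-1,0) (by decide) hvaS⟩
      · exact absurd hvaS hc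
      · exact ⟨((-1,-1),false), by decide, fun hE => hE (0,-1) (by decide) hvaS⟩
      · exact ⟨((0,-1),false), by decide, fun hE => hE (1,-1) (by decide) hvaS⟩
      · exact ⟨((-1,0),false), by decide, fun hE => hE (-1,1) (by decide) hvaS⟩
    have hB : ∃ GB ∈ ({((0,-1),false),((1,-1),false),((0,0),false)} : Finset Face),
        ¬EmptyFace S GB := by
      rcases hdb with ⟨rfl,rfl⟩|⟨rfl,rfl⟩|⟨rfl,rfl⟩|⟨rfl,rfl⟩|⟨rfl,rfl⟩|⟨rfl,rfl⟩
      · exact ⟨((1,-1),false), by decide, fun hE => hE (2,0) (by decide) hvbS⟩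
      · exact absurd hvbS ha
      · exact ⟨((0,0),false), by decide, fun hE => hE (1,1) (by decide) hvbS⟩
      · exact ⟨((0,-1),false), by decide, fun hE => hE (1,-1) (by decide) hvbS⟩
      · exact ⟨((1,-1),false), by decide, fun hE => hE (2,-1) (by decide) hvbS⟩
      · exact absurd hvbS hc
    have hC : ∃ GC ∈ ({((0,0),false),((-1,0),false),((-1,1),false)} : Finset Face),
        ¬EmptyFace S GC := by
      rcases hdc with ⟨rfl,rfl⟩|⟨rfl,rfl⟩|⟨rfl,rfl⟩|⟨rfl,rfl⟩|⟨rfl,rfl⟩|⟨rfl,rfl⟩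
      · exact ⟨((0,0),false), by decide, fun hE => hE (1,1) (by decide) hvcS⟩
      · exact ⟨((-1,0),false), by decide, fun hE => hE (-1,1) (by decide) hvcS⟩
      · exact ⟨((-1,1),false), by decide, fun hE => hE (0,2) (by decide) hvcS⟩
      · exact absurd hvcS ha
      · exact absurd hvcS hb
      · exact ⟨((-1,1),false), by decide, fun hE => hE (-1,2) (by decide) hvcS⟩
    obtain ⟨GA, hGAm, hGAne⟩ := hA
    obtain ⟨GB, hGBm, hGBne⟩ := hB
    obtain ⟨GC, hGCm, hGCne⟩ := hC
    simp only [Finset.mem_insert, Finset.mem_singleton] at hGAm hGBm hGCm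
    rcases hGAm with rfl|rfl|rfl <;> rcases hGBm with rfl|rfl|rfl <;>
      first
        | exact le4 _ _ (by decide) (by decide) (by decide) hGAne hGBne
        | (rcases hGCm with rfl|rfl|rfl <;>
            exact le4 _ _ (by decide) (by decide) (by decide) hGBne hGCne)


-- symmetry machinery
def symV (n : Bool) (s t : ℤ) (v : ℤ × ℤ) : ℤ × ℤ :=
  if n then (s - v.1, t - v.2) else (v.1 + s, v.2 + t)
def symF (n : Bool) (s t : ℤ) (F : Face) : Face :=
  if n then ((s - F.1.1 - 1, t - F.1.2 - 1), !F.2) else ((F.1.1 + s, F.1.2 + t), F.2)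

lemma symV_inj (n s t) : Function.Injective (symV n s t) := by
  rintro ⟨a,b⟩ ⟨c,d⟩ h
  cases n <;> simp [symV, Prod.ext_iff] at h ⊢ <;> omega

lemma symV_surj (n s t) : Function.Surjective (symV n s t) := by
  rintro ⟨a,b⟩
  cases n
  · exact ⟨(a - s, b - t), by simp [symV]⟩
  · exact ⟨(s - a, t - b), by simp [symV]⟩

lemma symF_inj (n s t) : Function.Injective (symF n s t) := by
  rintro ⟨⟨a,b⟩,u⟩ ⟨⟨c,d⟩,w⟩ h
  cases n <;> simp [symF, Prod.ext_iff] at h ⊢ <;>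
    exact ⟨⟨by omega, by omega⟩, by simpa using h.2⟩

lemma symF_surj (n s t) : Function.Surjective (symF n s t) := by
  rintro ⟨⟨a,b⟩,u⟩
  cases n
  · exact ⟨((a - s, b - t), u), by simp [symF]⟩
  · exact ⟨((s - a - 1, t - b - 1), !u), by simp [symF]; omega⟩

lemma faceVerts_symF (n s t F) : faceVerts (symF n s t F) = (faceVerts F).image (symV n s t) := by
  obtain ⟨⟨p,q⟩,b⟩ := F
  cases n <;> cases b <;>
  · ext ⟨x,y⟩
    simp [faceVerts, symF, symV, Prod.ext_iff]
    omega

lemma triAdj_symV (n s t u v) : TriAdj (symV n s t u) (symV n s t v) ↔ TriAdj u v := by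
  obtain ⟨a,b⟩ := u; obtain ⟨c,d⟩ := v
  cases n <;> simp [TriAdj, symV, Prod.ext_iff] <;> omega

lemma card_inter_symF (n s t F G) :
    (faceVerts (symF n s t F) ∩ faceVerts (symF n s t G)).card = (faceVerts F ∩ faceVerts G).card := by
  rw [faceVerts_symF, faceVerts_symF,
    (Finset.image_inter _ _ (symV_inj n s t)).symm,
    Finset.card_image_of_injective _ (symV_inj n s t)]

lemma edge_symF (n s t F G) : EdgeConnected (symF n s t F) (symF n s t G) ↔ EdgeConnected F G := by
  unfold EdgeConnected
  rw [card_inter_symF]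
  constructor
  · rintro ⟨h1, h2⟩; exact ⟨fun e => h1 (by rw [e]), h2⟩
  · rintro ⟨h1, h2⟩; exact ⟨fun e => h1 (symF_inj n s t e), h2⟩

lemma point_symF (n s t F G) : PointConnected (symF n s t F) (symF n s t G) ↔ PointConnected F G := by
  unfold PointConnected
  rw [card_inter_symF]
  constructor
  · rintro ⟨h1, h2, h3⟩
    refine ⟨fun e => h1 (by rw [e]), h2, ?_⟩
    rintro ⟨H, hHF, hHG⟩
    exact h3 ⟨symF n s t H, (edge_symF n s t _ _).mpr hHF, (edge_symF n s t _ _).mpr hHG⟩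
  · rintro ⟨h1, h2, h3⟩
    refine ⟨fun e => h1 (symF_inj n s t e), h2, ?_⟩
    rintro ⟨H, hHF, hHG⟩
    obtain ⟨H0, rfl⟩ := symF_surj n s t H
    exact h3 ⟨H0, (edge_symF n s t _ _).mp hHF, (edge_symF n s t _ _).mp hHG⟩

lemma conn_symF (n s t F G) : FaceConnected (symF n s t F) (symF n s t G) ↔ FaceConnected F G := by
  unfold FaceConnected; rw [edge_symF, point_symF]

lemma empty_symF (n s t S F) : EmptyFace (symV n s t '' S) (symF n s t F) ↔ EmptyFace S F := by
  unfold EmptyFace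
  rw [faceVerts_symF]
  constructor
  · intro h v hv hvS
    exact h _ (Finset.mem_image_of_mem _ hv) ⟨v, hvS, rfl⟩
  · intro h v hv hvS
    obtain ⟨w, hw, rfl⟩ := Finset.mem_image.mp hv
    obtain ⟨w', hw', he⟩ := hvS
    rw [symV_inj n s t he] at hw'
    exact h _ hw hw'

lemma isMIS_symV (n s t S) (hS : IsMIS S) : IsMIS (symV n s t '' S) := by
  constructor
  · rintro u ⟨u0, hu0, rfl⟩ v ⟨v0, hv0, rfl⟩ hadj
    exact hS.1 u0 hu0 v0 hv0 ((triAdj_symV n s t _ _).mp hadj)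
  · intro u hu
    obtain ⟨u0, rfl⟩ := symV_surj n s t u
    have hu0 : u0 ∉ S := fun h => hu ⟨u0, h, rfl⟩
    obtain ⟨v, hvS, hadj⟩ := hS.2 u0 hu0
    exact ⟨symV n s t v, ⟨v, hvS, rfl⟩, (triAdj_symV n s t _ _).mpr hadj⟩

lemma set_symF (n s t S F) :
    {G : Face | FaceConnected (symF n s t F) G ∧ EmptyFace (symV n s t '' S) G} =
      symF n s t '' {G : Face | FaceConnected F G ∧ EmptyFace S G} := by
  ext G
  constructor
  · rintro ⟨hc, he⟩
    obtain ⟨G0, rfl⟩ := symF_surj n s t G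
    exact ⟨G0, ⟨(conn_symF n s t _ _).mp hc, (empty_symF n s t S G0).mp he⟩, rfl⟩
  · rintro ⟨G0, ⟨hc, he⟩, rfl⟩
    exact ⟨(conn_symF n s t _ _).mpr hc, (empty_symF n s t S G0).mpr he⟩

lemma ncard_symF (n s t S F) :
    {G : Face | FaceConnected (symF n s t F) G ∧ EmptyFace (symV n s t '' S) G}.ncard =
      {G : Face | FaceConnected F G ∧ EmptyFace S G}.ncard := by
  rw [set_symF, Set.ncard_image_of_injective _ (symF_inj n s t)]


/-- An empty face of a maximal independent set has between 2 and 4 empty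
connected neighboring faces. -/
theorem empty_face_neighbors (S : Set (ℤ × ℤ)) (hS : IsMIS S)
    (F : Face) (hF : EmptyFace S F) :
    2 ≤ ({G : Face | FaceConnected F G ∧ EmptyFace S G}).ncard ∧
      ({G : Face | FaceConnected F G ∧ EmptyFace S G}).ncard ≤ 4 := by
  obtain ⟨⟨i,j⟩,b⟩ := F
  cases b
  · -- down face: reflect through symF true (i+1) (j+1)
    have hsym : symF true (i+1) (j+1) ((i,j),false) = ((0,0),true) := by
      simp [symF]
    have h1 := ncard_symF true (i+1) (j+1) S ((i,j),false)
    rw [hsym] at h1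
    have h2 := core _ (isMIS_symV true (i+1) (j+1) S hS)
      (by rw [← hsym]; exact (empty_symF true (i+1) (j+1) S ((i,j),false)).mpr hF)
    rw [h1] at h2
    exact h2
  · -- up face: translate through symF false (-i) (-j)
    have hsym : symF false (-i) (-j) ((i,j),true) = ((0,0),true) := by
      simp [symF]
    have h1 := ncard_symF false (-i) (-j) S ((i,j),true)
    rw [hsym] at h1
    have h2 := core _ (isMIS_symV false (-i) (-j) S hS)
      (by rw [← hsym]; exact (empty_symF false (-i) (-j) S ((i,j),true)).mpr hF)
    rw [h1] at h2
    exact h2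
end
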